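/- Let τ₁^(q) ∈ ℙ_int((A∩B)‾) be such that either τ₁ is W-critical or (σ₁, τ₁) ∈ W for some σ₁ with GS(σ₁) ≠ GS(τ₁). Let σ₂^(q−1) ∈ (A∩B)_Ā ∪ (A∩B)_B̄ be such that GS(τ₁) = GS(σ₂). Then there exists exactly one extended W-trajectory from τ₁ to σ₂ in which every simplex has ground simplex equal to GS(τ₁). -/

import Mathlib

open scoped Classical

noncomputable section

namespace DMT

variable {V : Type*} {U : Type*}

/-- An abstract simplicial complex: a nonempty collection of nonempty finite
sets of vertices that is closed under taking nonempty subsets. -/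
def IsComplex (K : Set (Finset V)) : Prop :=
  K.Nonempty ∧ ∀ σ ∈ K, σ.Nonempty ∧ ∀ τ : Finset V, τ ⊆ σ → τ.Nonempty → τ ∈ K

/-- The incidence number `⟨τ, σ⟩` of `σ` with respect to `τ`, where simplices are
oriented by listing their vertices increasingly: it is `(-1)^i` if `σ` is obtained
from `τ` by deleting the `i`-th vertex, and `0` if `σ` is not a facet of `τ`. -/
def incidence [LinearOrder V] (τ σ : Finset V) : ℤ :=
  if σ ⊆ τ ∧ τ.card = σ.card + 1 then
    ∑ v ∈ τ \ σ, (-1 : ℤ) ^ (τ.filter fun u => u < v).card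
  else 0

/-- A discrete vector field on a complex `K`: a set of pairs `(σ, τ)` of simplices of `K`
with `σ` a facet of `τ`, such that every simplex appears in at most one pair. -/
def IsDVF (K : Set (Finset U)) (W : Set (Finset U × Finset U)) : Prop :=
  (∀ p ∈ W, p.1 ∈ K ∧ p.2 ∈ K ∧ p.1 ⊆ p.2 ∧ p.2.card = p.1.card + 1) ∧
  ∀ p ∈ W, ∀ p' ∈ W, (p.1 = p'.1 ∨ p.1 = p'.2 ∨ p.2 = p'.1 ∨ p.2 = p'.2) → p = p'

/-- A simplex is critical for `W` if it appears in no pair of `W`. -/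
def IsCritical (W : Set (Finset U × Finset U)) (σ : Finset U) : Prop :=
  ∀ p ∈ W, p.1 ≠ σ ∧ p.2 ≠ σ

/-- The set of `q`-dimensional `W`-critical simplices of `K`. -/
def critSet (K : Set (Finset U)) (W : Set (Finset U × Finset U)) (q : ℕ) : Set (Finset U) :=
  {σ | σ ∈ K ∧ σ.card = q + 1 ∧ IsCritical W σ}

/-- A `W`-trajectory `τ₀, σ₁, τ₁, …, σ_k, τ_k`. -/
structure Traj (W : Set (Finset U × Finset U)) where
  k : ℕ
  t : ℕ → Finset U
  s : ℕ → Finset U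
  dim_t : ∀ i ≤ k, (t i).card = (t 0).card
  dim_s : ∀ i, 1 ≤ i → i ≤ k → (s i).card + 1 = (t 0).card
  mem : ∀ i, 1 ≤ i → i ≤ k → (s i, t i) ∈ W
  sub : ∀ i, 1 ≤ i → i ≤ k → s i ⊆ t (i - 1)
  nmem : ∀ i, 1 ≤ i → i ≤ k → (s i, t (i - 1)) ∉ W

/-- `W` is acyclic: there is no nontrivial closed `W`-trajectory. -/
def IsAcyclic (W : Set (Finset U × Finset U)) : Prop :=
  ¬ ∃ P : Traj W, 1 < P.k ∧ P.t 0 = P.t P.k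

/-- A gradient vector field on `K`: an acyclic discrete vector field. -/
def IsGVF (K : Set (Finset U)) (W : Set (Finset U × Finset U)) : Prop :=
  IsDVF K W ∧ IsAcyclic W

/-- An extended `W`-trajectory `τ₀, σ₁, τ₁, …, σ_k, τ_k, σ_{k+1}`, with
`(σᵢ, τᵢ) ∈ W` for `1 ≤ i ≤ k`, and `σᵢ ⊆ τ_{i-1}`, `(σᵢ, τ_{i-1}) ∉ W` for
`1 ≤ i ≤ k + 1`.  (The values of `t` and `s` outside the relevant ranges are
normalized to `∅`.) -/
structure ExtTraj (W : Set (Finset U × Finset U)) where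
  k : ℕ
  t : ℕ → Finset U
  s : ℕ → Finset U
  dim_t : ∀ i ≤ k, (t i).card = (t 0).card
  dim_s : ∀ i, 1 ≤ i → i ≤ k + 1 → (s i).card + 1 = (t 0).card
  mem : ∀ i, 1 ≤ i → i ≤ k → (s i, t i) ∈ W
  sub : ∀ i, 1 ≤ i → i ≤ k + 1 → s i ⊆ t (i - 1)
  nmem : ∀ i, 1 ≤ i → i ≤ k + 1 → (s i, t (i - 1)) ∉ W
  pad_t : ∀ i, k < i → t i = ∅
  pad_s : ∀ i, i = 0 ∨ k + 1 < i → s i = ∅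

/-- The weight of an extended trajectory. -/
def ExtTraj.weight [LinearOrder U] {W : Set (Finset U × Finset U)} (P : ExtTraj W) : ℤ :=
  (∏ i ∈ Finset.range P.k,
      -(incidence (P.t i) (P.s (i + 1)) * incidence (P.t (i + 1)) (P.s (i + 1)))) *
    incidence (P.t P.k) (P.s (P.k + 1))

/-- `Γ(τ, σ)`: the extended `W`-trajectories with initial simplex `τ` and terminal
simplex `σ`. -/
def Gamma (W : Set (Finset U × Finset U)) (τ σ : Finset U) : Set (ExtTraj W) :=
  {P | P.t 0 = τ ∧ P.s (P.k + 1) = σ}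

/-- The Thom–Smale boundary coefficient `Σ_{P ∈ Γ(τ,σ)} w(P)`. -/
def tsCoeff [LinearOrder U] (W : Set (Finset U × Finset U)) (τ σ : Finset U) : ℤ :=
  ∑ᶠ P ∈ Gamma W τ σ, ExtTraj.weight P

/-- The copy of a complex under a vertex map. -/
def copy [DecidableEq U] (f : V → U) (K : Set (Finset V)) : Set (Finset U) :=
  {σ | ∃ γ ∈ K, σ = γ.image f}

/-- Pull a simplex of a copy back to the original vertex set. -/
def pull [Fintype V] [DecidableEq U] (f : V → U) (σ : Finset U) : Finset V :=
  Finset.univ.filter fun v => f v ∈ σ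

/-- The ground simplex of a simplex of the prism (with `a`-vertices and `b`-vertices). -/
def GS [Fintype V] [DecidableEq U] (a b : V → U) (σ : Finset U) : Finset V :=
  Finset.univ.filter fun v => a v ∈ σ ∨ b v ∈ σ

/-- The simplex `{a_{i₀}, …, a_{i_r}, b_{i_r}, …, b_{i_q}}` of the prism over
`γ = {v_{i₀} < … < v_{i_q}}`, with pivot `v = v_{i_r}`. -/
def mixA [LinearOrder V] [DecidableEq U] (a b : V → U) (γ : Finset V) (v : V) : Finset U :=
  (γ.filter fun u => u ≤ v).image a ∪ (γ.filter fun u => v ≤ u).image b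

/-- The simplex `{a_{i₀}, …, a_{i_{r-1}}, b_{i_r}, …, b_{i_q}}` of the prism over
`γ`, with pivot `v = v_{i_r}`. -/
def mixB [LinearOrder V] [DecidableEq U] (a b : V → U) (γ : Finset V) (v : V) : Finset U :=
  (γ.filter fun u => u < v).image a ∪ (γ.filter fun u => v ≤ u).image b

/-- `A_γ`. -/
def AsetOf [LinearOrder V] [DecidableEq U] (a b : V → U) (γ : Finset V) : Set (Finset U) :=
  {σ | ∃ v ∈ γ, σ = mixA a b γ v}

/-- `B_γ`. -/
def BsetOf [LinearOrder V] [DecidableEq U] (a b : V → U) (γ : Finset V) : Set (Finset U) :=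
  {σ | ∃ v ∈ γ, σ = mixB a b γ v} ∪ {γ.image a}

/-- `S_γ = A_γ ∪ B_γ`. -/
def SsetOf [LinearOrder V] [DecidableEq U] (a b : V → U) (γ : Finset V) : Set (Finset U) :=
  AsetOf a b γ ∪ BsetOf a b γ

/-- The prism `ℙ(C)` over the complex `C`, realized with `a`-vertices and `b`-vertices. -/
def prism [LinearOrder V] [DecidableEq U] (a b : V → U) (C : Set (Finset V)) :
    Set (Finset U) :=
  ⋃ γ ∈ C, SsetOf a b γ

/-- The interior simplices of the prism. -/
def prismInt [LinearOrder V] [DecidableEq U] (a b : V → U) (C : Set (Finset V)) :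
    Set (Finset U) :=
  prism a b C \ (copy a C ∪ copy b C)

/-- The complex `X̃ = Ā ∪ ℙ((A ∩ B)‾) ∪ B̄`. -/
def tilde [LinearOrder V] [DecidableEq U] (a b : V → U) (A B : Set (Finset V)) :
    Set (Finset U) :=
  copy a A ∪ prism a b (A ∩ B) ∪ copy b B

/-- The prism pairing `𝒱`: for each `γ ∈ C` and `v ∈ γ`, the pair
`([a_{i₀},…,a_{i_{r-1}}, b_{i_r},…,b_{i_q}], [a_{i₀},…,a_{i_r}, b_{i_r},…,b_{i_q}])`. -/
def prismVF [LinearOrder V] [DecidableEq U] (a b : V → U) (C : Set (Finset V)) :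
    Set (Finset U × Finset U) :=
  {p | ∃ γ ∈ C, ∃ v ∈ γ, p = (mixB a b γ v, mixA a b γ v)}

/-- `v` is the minimum vertex of `γ`. -/
def isMin [Preorder V] (γ : Finset V) (v : V) : Prop :=
  v ∈ γ ∧ ∀ u ∈ γ, v ≤ u

/-- The pairing `W'` of the interior simplices of the prism, induced by the gradient
vector field `WC` on the copy (under `c`) of the intersection complex `C`. -/
def WprimeSet [Fintype V] [LinearOrder V] [DecidableEq U] (a b c : V → U)
    (C : Set (Finset V)) (WC : Set (Finset U × Finset U)) : Set (Finset U × Finset U) :=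
  {p | ∃ pr ∈ WC, ∃ v, isMin (pull c pr.1) v ∧
      p = (mixA a b (pull c pr.1) v, mixA a b (pull c pr.2) v)} ∪
  {p | ∃ pr ∈ WC, ∃ v vm am, isMin (pull c pr.2) vm ∧ isMin (pull c pr.1) am ∧
      v ∈ pull c pr.2 ∧ v ≠ vm ∧
      p = (mixB a b (pull c pr.2) v, mixA a b (pull c pr.2) (if v = am then vm else v))} ∪
  {p | ∃ pr ∈ WC, ∃ v am, isMin (pull c pr.1) am ∧ v ∈ pull c pr.1 ∧ v ≠ am ∧
      p = (mixB a b (pull c pr.1) v, mixA a b (pull c pr.1) v)} ∪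
  {p | ∃ γ : Finset V, γ ∈ C ∧ IsCritical WC (γ.image c) ∧
      ∃ v vm, isMin γ vm ∧ v ∈ γ ∧ v ≠ vm ∧ p = (mixB a b γ v, mixA a b γ v)}

/-- The discrete vector field `W = W_Ā ∪ W_B̄ ∪ W'` on `X̃`. -/
def Wfield [Fintype V] [LinearOrder V] [DecidableEq U] (a b c : V → U)
    (C : Set (Finset V)) (WA WB WC : Set (Finset U × Finset U)) :
    Set (Finset U × Finset U) :=
  WA ∪ WB ∪ WprimeSet a b c C WC

/-- Transfer a simplex of the copy under `c` to the corresponding simplex of the copy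
under `f`. -/
def transferMap [Fintype V] [DecidableEq U] (c f : V → U) (σ : Finset U) : Finset U :=
  (pull c σ).image f

/-- A mixed (Mayer–Vietoris) trajectory: a descending extended trajectory
`τ₀, σ₁, τ₁, …, σ_p, τ_p` for `WC` in the copy of the intersection, transferred by
`tr` into another copy, followed by an ascending path
`τ'_p, α_p, τ'_{p+1}, …, α_{p+l-1}, τ'_{p+l}` for `WD`. -/
structure MixTraj (WC WD : Set (Finset U × Finset U)) (tr : Finset U → Finset U) where
  p : ℕ
  l : ℕ
  t : ℕ → Finset U
  s : ℕ → Finset U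
  t' : ℕ → Finset U
  a' : ℕ → Finset U
  dim_t : ∀ i ≤ p, (t i).card = (t 0).card
  dim_s : ∀ i, 1 ≤ i → i ≤ p → (s i).card + 1 = (t 0).card
  dim_t' : ∀ i, p ≤ i → i ≤ p + l → (t' i).card = (t 0).card
  dim_a' : ∀ i, p ≤ i → i < p + l → (a' i).card = (t 0).card + 1
  mem_s : ∀ i, 1 ≤ i → i ≤ p → (s i, t i) ∈ WC
  sub_s : ∀ i, 1 ≤ i → i ≤ p → s i ⊆ t (i - 1)
  nmem_s : ∀ i, 1 ≤ i → i ≤ p → (s i, t (i - 1)) ∉ WC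
  link : t' p = tr (t p)
  mem_a : ∀ i, p ≤ i → i < p + l → (t' i, a' i) ∈ WD
  sub_a : ∀ i, p + 1 ≤ i → i ≤ p + l → t' i ⊆ a' (i - 1)
  nmem_a : ∀ i, p + 1 ≤ i → i ≤ p + l → (t' i, a' (i - 1)) ∉ WD
  pad_t : ∀ i, p < i → t i = ∅
  pad_s : ∀ i, i = 0 ∨ p < i → s i = ∅
  pad_t' : ∀ i, i < p ∨ p + l < i → t' i = ∅
  pad_a' : ∀ i, i < p ∨ p + l ≤ i → a' i = ∅

/-- The product of incidence signs along a mixed trajectory (without the leading sign). -/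
def MixTraj.wcore [LinearOrder U] {WC WD : Set (Finset U × Finset U)}
    {tr : Finset U → Finset U} (P : MixTraj WC WD tr) : ℤ :=
  (∏ i ∈ Finset.range P.p,
      -(incidence (P.t i) (P.s (i + 1)) * incidence (P.t (i + 1)) (P.s (i + 1)))) *
  ∏ i ∈ Finset.range P.l,
      -(incidence (P.a' (P.p + i)) (P.t' (P.p + i)) *
        incidence (P.a' (P.p + i)) (P.t' (P.p + i + 1)))

/-- A Mayer–Vietoris trajectory: one of the five kinds. -/
inductive MVTraj (WA WB WC : Set (Finset U × Finset U)) (trA trB : Finset U → Finset U)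
  | viaA : ExtTraj WA → MVTraj WA WB WC trA trB
  | viaB : ExtTraj WB → MVTraj WA WB WC trA trB
  | viaC : ExtTraj WC → MVTraj WA WB WC trA trB
  | crossA : MixTraj WC WA trA → MVTraj WA WB WC trA trB
  | crossB : MixTraj WC WB trB → MVTraj WA WB WC trA trB

/-- The weight `w_M` of a Mayer–Vietoris trajectory. -/
def MVTraj.wM [LinearOrder U] {WA WB WC : Set (Finset U × Finset U)}
    {trA trB : Finset U → Finset U} : MVTraj WA WB WC trA trB → ℤ
  | .viaA P => P.weight
  | .viaB P => P.weight
  | .viaC P => -P.weight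
  | .crossA P => -P.wcore
  | .crossB P => P.wcore

/-- A Mayer–Vietoris trajectory goes from `β` to `α` (with the required criticality of
the endpoints in the respective copies `Abar`, `Bbar`, `Cbar`). -/
def MVTraj.ends {WA WB WC : Set (Finset U × Finset U)} {trA trB : Finset U → Finset U}
    (Abar Bbar Cbar : Set (Finset U)) :
    MVTraj WA WB WC trA trB → Finset U → Finset U → Prop
  | .viaA T, β, α => T.t 0 = β ∧ T.s (T.k + 1) = α ∧
      β ∈ Abar ∧ IsCritical WA β ∧ α ∈ Abar ∧ IsCritical WA α
  | .viaB T, β, α => T.t 0 = β ∧ T.s (T.k + 1) = α ∧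
      β ∈ Bbar ∧ IsCritical WB β ∧ α ∈ Bbar ∧ IsCritical WB α
  | .viaC T, β, α => T.t 0 = β ∧ T.s (T.k + 1) = α ∧
      β ∈ Cbar ∧ IsCritical WC β ∧ α ∈ Cbar ∧ IsCritical WC α
  | .crossA T, β, α => T.t 0 = β ∧ T.t' (T.p + T.l) = α ∧
      β ∈ Cbar ∧ IsCritical WC β ∧ α ∈ Abar ∧ IsCritical WA α
  | .crossB T, β, α => T.t 0 = β ∧ T.t' (T.p + T.l) = α ∧
      β ∈ Cbar ∧ IsCritical WC β ∧ α ∈ Bbar ∧ IsCritical WB α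

/-- `MV(β, α)`: the set of Mayer–Vietoris trajectories from `β` to `α`. -/
def MVset (WA WB WC : Set (Finset U × Finset U)) (trA trB : Finset U → Finset U)
    (Abar Bbar Cbar : Set (Finset U)) (β α : Finset U) :
    Set (MVTraj WA WB WC trA trB) :=
  {P | MVTraj.ends Abar Bbar Cbar P β α}

/-- The Mayer–Vietoris boundary coefficient `Σ_{P ∈ MV(β,α)} w_M(P)`. -/
def mvCoeff [LinearOrder U] (WA WB WC : Set (Finset U × Finset U))
    (trA trB : Finset U → Finset U) (Abar Bbar Cbar : Set (Finset U))
    (β α : Finset U) : ℤ :=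
  ∑ᶠ P ∈ MVset WA WB WC trA trB Abar Bbar Cbar β α, MVTraj.wM P

/-- The generating sets `D_q(X)`. -/
def Dset (Abar Bbar Cbar : Set (Finset U)) (WA WB WC : Set (Finset U × Finset U)) :
    ℕ → Set (Finset U)
  | 0 => critSet Abar WA 0 ∪ critSet Bbar WB 0
  | (q + 1) => critSet Abar WA (q + 1) ∪ critSet Bbar WB (q + 1) ∪ critSet Cbar WC q

/-- The `q`-dimensional simplices of a complex. -/
def simpSet (K : Set (Finset V)) (q : ℕ) : Set (Finset V) :=
  {σ | σ ∈ K ∧ σ.card = q + 1}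

/-- The boundary homomorphism of a chain complex of free abelian groups, determined by a
matrix of coefficients. -/
def chainBoundary {ι κ : Type*} (coeff : ι → κ → ℤ) : (ι →₀ ℤ) →ₗ[ℤ] (κ →₀ ℤ) :=
  Finsupp.lsum ℤ fun i =>
    LinearMap.toSpanSingleton ℤ (κ →₀ ℤ) (∑ᶠ j : κ, coeff i j • Finsupp.single j 1)

/-- The family of boundary maps of the chain complex of free abelian groups with
generating sets `S q` and boundary coefficients `coeff` (with the convention that the
boundary in degree `0` is the zero map). -/
def fullBoundary {W : Type*} (S : ℕ → Set (Finset W)) (coeff : Finset W → Finset W → ℤ) :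
    ∀ q : ℕ, ((S q : Set (Finset W)) →₀ ℤ) →+ ((S (q - 1) : Set (Finset W)) →₀ ℤ)
  | 0 => 0
  | (q + 1) => (chainBoundary fun (i : (S (q + 1) : Set (Finset W))) (j : (S q : Set (Finset W))) =>
      coeff (i : Finset W) (j : Finset W)).toAddMonoidHom

/-- `ker d ⧸ im d'`. -/
abbrev homologyAt {L M N : Type*} [AddCommGroup L] [AddCommGroup M] [AddCommGroup N]
    (d : M →+ N) (d' : L →+ M) : Type _ :=
  (↥d.ker) ⧸ (AddSubgroup.comap d.ker.subtype d'.range)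

/-- The `q`-th homology group of the chain complex of free abelian groups with
generating sets `S` and boundary coefficients `coeff`. -/
abbrev homologyOf {W : Type*} (S : ℕ → Set (Finset W)) (coeff : Finset W → Finset W → ℤ)
    (q : ℕ) : Type _ :=
  homologyAt (fullBoundary S coeff q) (fullBoundary S coeff (q + 1))

/-- The map `f` from critical simplices of `X̃` to generators of the Mayer–Vietoris
complex: the identity on critical simplices of `Ā` and `B̄`, and the (copy in
`(A ∩ B)‾` of the) ground simplex on interior critical simplices of the prism. -/
def fmap [Fintype V] [LinearOrder V] [DecidableEq U] (a b c : V → U)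
    (C : Set (Finset V)) (τ : Finset U) : Finset U :=
  if τ ∈ prismInt a b C then (GS a b τ).image c else τ

/-- The simplex `[a_{i₀}, b_{i₀}, …, b_{i_{q-1}}]` of the prism over `γ`. -/
def aMinCopy [Fintype V] [LinearOrder V] [DecidableEq U] (a b : V → U) (γ : Finset V) :
    Finset U :=
  (γ.filter fun u => ∀ w ∈ γ, u ≤ w).image a ∪ γ.image b

/-- The map `g` from generators of the Mayer–Vietoris complex to critical simplices of
`X̃`: the identity on critical simplices of `Ā` and `B̄`, and
`[c_{i₀},…,c_{i_{q-1}}] ↦ [a_{i₀}, b_{i₀}, …, b_{i_{q-1}}]` on critical simplices of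
`(A ∩ B)‾`. -/
def gmap [Fintype V] [LinearOrder V] [DecidableEq U] (a b c : V → U)
    (Cbar : Set (Finset U)) (α : Finset U) : Finset U :=
  if α ∈ Cbar then aMinCopy a b (pull c α) else α


/-! ### Auxiliary lemmas for Statement 12 -/

section Aux

set_option linter.unusedSectionVars false

variable {V : Type*} {U : Type*} [Fintype V] [LinearOrder V] [LinearOrder U]

variable {a b : V → U} {γ δ : Finset V} {v w u x : V}

lemma a_mem_mixA (ha : Function.Injective a) (hab : ∀ u v : V, a u ≠ b v) :
    a u ∈ mixA a b γ w ↔ u ∈ γ ∧ u ≤ w := by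
  simp only [mixA, Finset.mem_union, Finset.mem_image, Finset.mem_filter]
  constructor
  · rintro (⟨x, ⟨hx, hxw⟩, hax⟩ | ⟨x, hx, hax⟩)
    · obtain rfl := ha hax; exact ⟨hx, hxw⟩
    · exact ((hab u x) hax.symm).elim
  · rintro ⟨h1, h2⟩; exact Or.inl ⟨u, ⟨h1, h2⟩, rfl⟩

lemma b_mem_mixA (hb : Function.Injective b) (hab : ∀ u v : V, a u ≠ b v) :
    b u ∈ mixA a b γ w ↔ u ∈ γ ∧ w ≤ u := by
  simp only [mixA, Finset.mem_union, Finset.mem_image, Finset.mem_filter]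
  constructor
  · rintro (⟨x, ⟨hx, hxw⟩, hax⟩ | ⟨x, ⟨hx, hxw⟩, hax⟩)
    · exact ((hab x u) hax).elim
    · obtain rfl := hb hax; exact ⟨hx, hxw⟩
  · rintro ⟨h1, h2⟩; exact Or.inr ⟨u, ⟨h1, h2⟩, rfl⟩

lemma a_mem_mixB (ha : Function.Injective a) (hab : ∀ u v : V, a u ≠ b v) :
    a u ∈ mixB a b γ w ↔ u ∈ γ ∧ u < w := by
  simp only [mixB, Finset.mem_union, Finset.mem_image, Finset.mem_filter]
  constructor
  · rintro (⟨x, ⟨hx, hxw⟩, hax⟩ | ⟨x, hx, hax⟩)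
    · obtain rfl := ha hax; exact ⟨hx, hxw⟩
    · exact ((hab u x) hax.symm).elim
  · rintro ⟨h1, h2⟩; exact Or.inl ⟨u, ⟨h1, h2⟩, rfl⟩

lemma b_mem_mixB (hb : Function.Injective b) (hab : ∀ u v : V, a u ≠ b v) :
    b u ∈ mixB a b γ w ↔ u ∈ γ ∧ w ≤ u := by
  simp only [mixB, Finset.mem_union, Finset.mem_image, Finset.mem_filter]
  constructor
  · rintro (⟨x, ⟨hx, hxw⟩, hax⟩ | ⟨x, ⟨hx, hxw⟩, hax⟩)
    · exact ((hab x u) hax).elim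
    · obtain rfl := hb hax; exact ⟨hx, hxw⟩
  · rintro ⟨h1, h2⟩; exact Or.inr ⟨u, ⟨h1, h2⟩, rfl⟩

lemma a_mem_image_b (hab : ∀ u v : V, a u ≠ b v) : a u ∉ γ.image b := by
  simp only [Finset.mem_image, not_exists]
  rintro x ⟨hx, hax⟩; exact (hab u x) hax.symm

lemma b_mem_image_a (hab : ∀ u v : V, a u ≠ b v) : b u ∉ γ.image a := by
  simp only [Finset.mem_image, not_exists]
  rintro x ⟨hx, hax⟩; exact (hab x u) hax

lemma GS_mixA (ha : Function.Injective a) (hb : Function.Injective b)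
    (hab : ∀ u v : V, a u ≠ b v) : GS a b (mixA a b γ w) = γ := by
  ext u
  simp only [GS, Finset.mem_filter, Finset.mem_univ, true_and,
    a_mem_mixA ha hab, b_mem_mixA hb hab]
  constructor
  · rintro (⟨h, _⟩ | ⟨h, _⟩) <;> exact h
  · intro h
    rcases le_total u w with h' | h'
    · exact Or.inl ⟨h, h'⟩
    · exact Or.inr ⟨h, h'⟩

lemma GS_mixB (ha : Function.Injective a) (hb : Function.Injective b)
    (hab : ∀ u v : V, a u ≠ b v) : GS a b (mixB a b γ w) = γ := by
  ext u
  simp only [GS, Finset.mem_filter, Finset.mem_univ, true_and,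
    a_mem_mixB ha hab, b_mem_mixB hb hab]
  constructor
  · rintro (⟨h, _⟩ | ⟨h, _⟩) <;> exact h
  · intro h
    rcases lt_or_ge u w with h' | h'
    · exact Or.inl ⟨h, h'⟩
    · exact Or.inr ⟨h, h'⟩

lemma GS_image_a (ha : Function.Injective a) (hab : ∀ u v : V, a u ≠ b v) :
    GS a b (γ.image a) = γ := by
  ext u
  simp only [GS, Finset.mem_filter, Finset.mem_univ, true_and]
  constructor
  · rintro (h | h)
    · obtain ⟨x, hx, hax⟩ := Finset.mem_image.1 h; obtain rfl := ha hax; exact hx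
    · exact (b_mem_image_a hab h).elim
  · intro h; exact Or.inl (Finset.mem_image_of_mem a h)

lemma GS_image_b (hb : Function.Injective b) (hab : ∀ u v : V, a u ≠ b v) :
    GS a b (γ.image b) = γ := by
  ext u
  simp only [GS, Finset.mem_filter, Finset.mem_univ, true_and]
  constructor
  · rintro (h | h)
    · exact (a_mem_image_b hab h).elim
    · obtain ⟨x, hx, hax⟩ := Finset.mem_image.1 h; obtain rfl := hb hax; exact hx
  · intro h; exact Or.inr (Finset.mem_image_of_mem b h)

lemma card_mixB (ha : Function.Injective a) (hb : Function.Injective b)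
    (hab : ∀ u v : V, a u ≠ b v) : (mixB a b γ w).card = γ.card := by
  rw [mixB, Finset.card_union_of_disjoint, Finset.card_image_of_injective _ ha,
    Finset.card_image_of_injective _ hb]
  · have h := Finset.card_filter_add_card_filter_not (s := γ) (p := fun u => u < w)
    simp only [not_lt] at h
    exact h
  · rw [Finset.disjoint_left]
    intro x hx hx'
    obtain ⟨y, _, rfl⟩ := Finset.mem_image.1 hx
    exact a_mem_image_b (γ := γ.filter fun u => w ≤ u) hab hx'

lemma card_mixA (ha : Function.Injective a) (hb : Function.Injective b)
    (hab : ∀ u v : V, a u ≠ b v) (hw : w ∈ γ) : (mixA a b γ w).card = γ.card + 1 := by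
  rw [mixA, Finset.card_union_of_disjoint, Finset.card_image_of_injective _ ha,
    Finset.card_image_of_injective _ hb]
  · have h1 : γ.filter (fun u => u ≤ w) = insert w (γ.filter fun u => u < w) := by
      ext x
      simp only [Finset.mem_filter, Finset.mem_insert]
      constructor
      · rintro ⟨hx, hxw⟩
        rcases eq_or_lt_of_le hxw with h | h
        · exact Or.inl h
        · exact Or.inr ⟨hx, h⟩
      · rintro (rfl | ⟨hx, hxw⟩)
        · exact ⟨hw, le_refl _⟩
        · exact ⟨hx, le_of_lt hxw⟩
    rw [h1, Finset.card_insert_of_notMem (by simp)]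
    have := card_mixB (γ := γ) (w := w) ha hb hab
    rw [mixB, Finset.card_union_of_disjoint, Finset.card_image_of_injective _ ha,
      Finset.card_image_of_injective _ hb] at this
    · omega
    · rw [Finset.disjoint_left]
      intro x hx hx'
      obtain ⟨y, _, rfl⟩ := Finset.mem_image.1 hx
      exact a_mem_image_b (γ := γ.filter fun u => w ≤ u) hab hx'
  · rw [Finset.disjoint_left]
    intro x hx hx'
    obtain ⟨y, _, rfl⟩ := Finset.mem_image.1 hx
    exact a_mem_image_b (γ := γ.filter fun u => w ≤ u) hab hx'


lemma mem_GS {s : Finset U} : u ∈ GS a b s ↔ a u ∈ s ∨ b u ∈ s := by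
  simp [GS]

lemma mem_mixA_iff {y : U} :
    y ∈ mixA a b γ w ↔ (∃ u, u ∈ γ ∧ u ≤ w ∧ y = a u) ∨ (∃ u, u ∈ γ ∧ w ≤ u ∧ y = b u) := by
  simp only [mixA, Finset.mem_union, Finset.mem_image, Finset.mem_filter]
  constructor
  · rintro (⟨x, ⟨h1, h2⟩, rfl⟩ | ⟨x, ⟨h1, h2⟩, rfl⟩)
    · exact Or.inl ⟨x, h1, h2, rfl⟩
    · exact Or.inr ⟨x, h1, h2, rfl⟩
  · rintro (⟨x, h1, h2, rfl⟩ | ⟨x, h1, h2, rfl⟩)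
    · exact Or.inl ⟨x, ⟨h1, h2⟩, rfl⟩
    · exact Or.inr ⟨x, ⟨h1, h2⟩, rfl⟩

lemma mem_mixB_iff {y : U} :
    y ∈ mixB a b γ w ↔ (∃ u, u ∈ γ ∧ u < w ∧ y = a u) ∨ (∃ u, u ∈ γ ∧ w ≤ u ∧ y = b u) := by
  simp only [mixB, Finset.mem_union, Finset.mem_image, Finset.mem_filter]
  constructor
  · rintro (⟨x, ⟨h1, h2⟩, rfl⟩ | ⟨x, ⟨h1, h2⟩, rfl⟩)
    · exact Or.inl ⟨x, h1, h2, rfl⟩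
    · exact Or.inr ⟨x, h1, h2, rfl⟩
  · rintro (⟨x, h1, h2, rfl⟩ | ⟨x, h1, h2, rfl⟩)
    · exact Or.inl ⟨x, ⟨h1, h2⟩, rfl⟩
    · exact Or.inr ⟨x, ⟨h1, h2⟩, rfl⟩

lemma mixB_subset_mixA : mixB a b γ w ⊆ mixA a b γ w := by
  intro x hx
  rw [mixB, Finset.mem_union] at hx
  rw [mixA, Finset.mem_union]
  rcases hx with hx | hx
  · left
    obtain ⟨y, hy, rfl⟩ := Finset.mem_image.1 hx
    exact Finset.mem_image_of_mem _ (Finset.mem_filter.2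
      ⟨(Finset.mem_filter.1 hy).1, le_of_lt (Finset.mem_filter.1 hy).2⟩)
  · right; exact hx

lemma mixA_inj (ha : Function.Injective a) (hb : Function.Injective b)
    (hab : ∀ u v : V, a u ≠ b v) (hv : v ∈ γ) (hw : w ∈ δ)
    (h : mixA a b γ v = mixA a b δ w) : γ = δ ∧ v = w := by
  have hγ : γ = δ := by
    have h1 := GS_mixA (γ := γ) (w := v) ha hb hab
    rw [h, GS_mixA ha hb hab] at h1
    exact h1.symm
  subst hγ
  refine ⟨rfl, le_antisymm ?_ ?_⟩
  · have : a v ∈ mixA a b γ w := h ▸ (a_mem_mixA ha hab).2 ⟨hv, le_refl v⟩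
    exact ((a_mem_mixA ha hab).1 this).2
  · have : a w ∈ mixA a b γ v := h.symm ▸ (a_mem_mixA ha hab).2 ⟨hw, le_refl w⟩
    exact ((a_mem_mixA ha hab).1 this).2

lemma mixB_inj (ha : Function.Injective a) (hb : Function.Injective b)
    (hab : ∀ u v : V, a u ≠ b v) (hv : v ∈ γ) (hw : w ∈ δ)
    (h : mixB a b γ v = mixB a b δ w) : γ = δ ∧ v = w := by
  have hγ : γ = δ := by
    have h1 := GS_mixB (γ := γ) (w := v) ha hb hab
    rw [h, GS_mixB ha hb hab] at h1
    exact h1.symm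
  subst hγ
  refine ⟨rfl, le_antisymm ?_ ?_⟩
  · have : b w ∈ mixB a b γ v := h.symm ▸ (b_mem_mixB hb hab).2 ⟨hw, le_refl w⟩
    exact ((b_mem_mixB hb hab).1 this).2
  · have : b v ∈ mixB a b γ w := h ▸ (b_mem_mixB hb hab).2 ⟨hv, le_refl v⟩
    exact ((b_mem_mixB hb hab).1 this).2

lemma mixA_ne_image_a (hb : Function.Injective b) (hab : ∀ u v : V, a u ≠ b v)
    (hv : v ∈ γ) : mixA a b γ v ≠ δ.image a := by
  intro h
  exact b_mem_image_a hab (h ▸ (b_mem_mixA hb hab).2 ⟨hv, le_refl v⟩)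

lemma mixA_ne_image_b (ha : Function.Injective a) (hab : ∀ u v : V, a u ≠ b v)
    (hv : v ∈ γ) : mixA a b γ v ≠ δ.image b := by
  intro h
  exact a_mem_image_b hab (h ▸ (a_mem_mixA ha hab).2 ⟨hv, le_refl v⟩)

lemma mixB_ne_image_a (hb : Function.Injective b) (hab : ∀ u v : V, a u ≠ b v)
    (hv : v ∈ γ) : mixB a b γ v ≠ δ.image a := by
  intro h
  exact b_mem_image_a hab (h ▸ (b_mem_mixB hb hab).2 ⟨hv, le_refl v⟩)

lemma image_a_ne_image_b (hab : ∀ u v : V, a u ≠ b v) (hne : γ.Nonempty) :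
    γ.image a ≠ δ.image b := by
  obtain ⟨x, hx⟩ := hne
  intro h
  exact a_mem_image_b hab (h ▸ Finset.mem_image_of_mem a hx)

lemma image_b_eq_mixB (hne : γ.Nonempty) : γ.image b = mixB a b γ (γ.min' hne) := by
  rw [mixB]
  have h1 : γ.filter (fun u => u < γ.min' hne) = ∅ :=
    Finset.filter_false_of_mem (fun x hx => not_lt.2 (γ.min'_le x hx))
  have h2 : γ.filter (fun u => γ.min' hne ≤ u) = γ :=
    Finset.filter_true_of_mem (fun x hx => γ.min'_le x hx)
  rw [h1, h2]
  simp

/-- The simplex obtained from `mixA a b γ w` by deleting `b w`. -/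
def upA (a b : V → U) (γ : Finset V) (w : V) : Finset U :=
  (γ.filter fun u => u ≤ w).image a ∪ (γ.filter fun u => w < u).image b

lemma mem_upA_iff {y : U} :
    y ∈ upA a b γ w ↔ (∃ u, u ∈ γ ∧ u ≤ w ∧ y = a u) ∨ (∃ u, u ∈ γ ∧ w < u ∧ y = b u) := by
  simp only [upA, Finset.mem_union, Finset.mem_image, Finset.mem_filter]
  constructor
  · rintro (⟨x, ⟨h1, h2⟩, rfl⟩ | ⟨x, ⟨h1, h2⟩, rfl⟩)
    · exact Or.inl ⟨x, h1, h2, rfl⟩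
    · exact Or.inr ⟨x, h1, h2, rfl⟩
  · rintro (⟨x, h1, h2, rfl⟩ | ⟨x, h1, h2, rfl⟩)
    · exact Or.inl ⟨x, ⟨h1, h2⟩, rfl⟩
    · exact Or.inr ⟨x, ⟨h1, h2⟩, rfl⟩

lemma upA_subset_mixA : upA a b γ w ⊆ mixA a b γ w := by
  intro x hx
  rcases mem_upA_iff.1 hx with ⟨u, h1, h2, rfl⟩ | ⟨u, h1, h2, rfl⟩
  · exact mem_mixA_iff.2 (Or.inl ⟨u, h1, h2, rfl⟩)
  · exact mem_mixA_iff.2 (Or.inr ⟨u, h1, le_of_lt h2, rfl⟩)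

lemma a_mem_upA (ha : Function.Injective a) (hab : ∀ u v : V, a u ≠ b v)
    (hv : v ∈ γ) : a v ∈ upA a b γ v := by
  rw [upA, Finset.mem_union]
  exact Or.inl (Finset.mem_image_of_mem _ (Finset.mem_filter.2 ⟨hv, le_refl v⟩))

lemma mixA_erase_a (ha : Function.Injective a) (hab : ∀ u v : V, a u ≠ b v)
    (hw : w ∈ γ) : (mixA a b γ w).erase (a w) = mixB a b γ w := by
  ext y
  rw [Finset.mem_erase]
  constructor
  · rintro ⟨hne, hy⟩
    rcases mem_mixA_iff.1 hy with ⟨u, h1, h2, rfl⟩ | ⟨u, h1, h2, rfl⟩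
    · have : u ≠ w := fun h => hne (by rw [h])
      exact mem_mixB_iff.2 (Or.inl ⟨u, h1, lt_of_le_of_ne h2 this, rfl⟩)
    · exact mem_mixB_iff.2 (Or.inr ⟨u, h1, h2, rfl⟩)
  · intro hy
    refine ⟨fun h => ?_, mixB_subset_mixA hy⟩
    rw [h] at hy
    rcases mem_mixB_iff.1 hy with ⟨u, h1, h2, hu⟩ | ⟨u, h1, h2, hu⟩
    · obtain rfl := ha hu
      exact absurd h2 (lt_irrefl _)
    · exact hab w u hu

lemma mixA_erase_b (hb : Function.Injective b) (hab : ∀ u v : V, a u ≠ b v)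
    (hw : w ∈ γ) : (mixA a b γ w).erase (b w) = upA a b γ w := by
  ext y
  rw [Finset.mem_erase]
  constructor
  · rintro ⟨hne, hy⟩
    rcases mem_mixA_iff.1 hy with ⟨u, h1, h2, rfl⟩ | ⟨u, h1, h2, rfl⟩
    · exact mem_upA_iff.2 (Or.inl ⟨u, h1, h2, rfl⟩)
    · have : u ≠ w := fun h => hne (by rw [h])
      exact mem_upA_iff.2 (Or.inr ⟨u, h1, lt_of_le_of_ne h2 (Ne.symm this), rfl⟩)
  · intro hy
    refine ⟨fun h => ?_, upA_subset_mixA hy⟩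
    rw [h] at hy
    rcases mem_upA_iff.1 hy with ⟨u, h1, h2, hu⟩ | ⟨u, h1, h2, hu⟩
    · exact hab u w hu.symm
    · obtain rfl := hb hu
      exact absurd h2 (lt_irrefl _)

lemma facet_classify (ha : Function.Injective a) (hb : Function.Injective b)
    (hab : ∀ u v : V, a u ≠ b v) (hw : w ∈ γ) {s : Finset U}
    (hsub : s ⊆ mixA a b γ w) (hcard : s.card = γ.card) (hGS : GS a b s = γ) :
    s = mixB a b γ w ∨ s = upA a b γ w := by
  have hcardA : (mixA a b γ w).card = γ.card + 1 := card_mixA ha hb hab hw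
  obtain ⟨x, hx, hxs⟩ : ∃ x ∈ mixA a b γ w, x ∉ s := by
    by_contra h
    push_neg at h
    have := Finset.card_le_card h
    omega
  have hse : s = (mixA a b γ w).erase x := by
    apply Finset.eq_of_subset_of_card_le
    · intro y hy
      exact Finset.mem_erase.2 ⟨fun hyx => hxs (hyx ▸ hy), hsub hy⟩
    · rw [Finset.card_erase_of_mem hx]
      omega
  rcases mem_mixA_iff.1 hx with ⟨u, h1, h2, rfl⟩ | ⟨u, h1, h2, rfl⟩
  · have hu : u = w := by
      by_contra hne
      have humem : u ∈ GS a b s := hGS.symm ▸ h1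
      rcases mem_GS.1 humem with h | h
      · exact hxs h
      · have := (b_mem_mixA hb hab).1 (hsub h)
        exact hne (le_antisymm h2 this.2)
    subst hu
    left
    rw [hse, mixA_erase_a ha hab hw]
  · have hu : u = w := by
      by_contra hne
      have humem : u ∈ GS a b s := hGS.symm ▸ h1
      rcases mem_GS.1 humem with h | h
      · have := (a_mem_mixA ha hab).1 (hsub h)
        exact hne (le_antisymm this.2 h2)
      · exact hxs h
    subst hu
    right
    rw [hse, mixA_erase_b hb hab hw]

/-- The next element of `γ` strictly above `w` (or `w` itself if there is none). -/
def nxt (γ : Finset V) (w : V) : V :=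
  if h : (γ.filter fun x => w < x).Nonempty then (γ.filter fun x => w < x).min' h else w

lemma nxt_spec (h : (γ.filter fun x => w < x).Nonempty) :
    nxt γ w ∈ γ ∧ w < nxt γ w ∧ ∀ x ∈ γ, w < x → nxt γ w ≤ x := by
  rw [nxt, dif_pos h]
  have hmem := Finset.min'_mem _ h
  rw [Finset.mem_filter] at hmem
  exact ⟨hmem.1, hmem.2, fun x hx hwx =>
    Finset.min'_le _ x (Finset.mem_filter.2 ⟨hx, hwx⟩)⟩

lemma nxt_min (h : (γ.filter fun x => w < x).Nonempty) :
    ∀ x ∈ γ, x < nxt γ w → x ≤ w := by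
  intro x hx hlt
  by_contra hc
  push_neg at hc
  exact absurd hlt (not_lt.2 ((nxt_spec h).2.2 x hx hc))

lemma filter_nxt (h : (γ.filter fun x => w < x).Nonempty) :
    (γ.filter fun x => nxt γ w < x) = (γ.filter fun x => w < x).erase (nxt γ w) := by
  obtain ⟨hmem, hlt, hle⟩ := nxt_spec h
  ext x
  rw [Finset.mem_erase, Finset.mem_filter, Finset.mem_filter]
  constructor
  · rintro ⟨hx, hnx⟩
    exact ⟨ne_of_gt hnx, hx, lt_trans hlt hnx⟩
  · rintro ⟨hne, hx, hwx⟩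
    exact ⟨hx, lt_of_le_of_ne (hle x hx hwx) (Ne.symm hne)⟩

lemma card_filter_nxt (h : (γ.filter fun x => w < x).Nonempty) :
    (γ.filter fun x => nxt γ w < x).card = (γ.filter fun x => w < x).card - 1 := by
  rw [filter_nxt h, Finset.card_erase_of_mem]
  rw [Finset.mem_filter]
  exact ⟨(nxt_spec h).1, (nxt_spec h).2.1⟩

lemma upA_eq_mixB_nxt (h : (γ.filter fun x => w < x).Nonempty) :
    upA a b γ w = mixB a b γ (nxt γ w) := by
  obtain ⟨hmem, hlt, hle⟩ := nxt_spec h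
  rw [upA, mixB]
  congr 1
  · congr 1
    ext x
    rw [Finset.mem_filter, Finset.mem_filter]
    exact ⟨fun ⟨hx, hxw⟩ => ⟨hx, lt_of_le_of_lt hxw hlt⟩,
      fun ⟨hx, hxn⟩ => ⟨hx, nxt_min h x hx hxn⟩⟩
  · congr 1
    ext x
    rw [Finset.mem_filter, Finset.mem_filter]
    exact ⟨fun ⟨hx, hxw⟩ => ⟨hx, hle x hx hxw⟩,
      fun ⟨hx, hxn⟩ => ⟨hx, lt_of_lt_of_le hlt hxn⟩⟩

lemma upA_eq_image_a (h : ¬(γ.filter fun x => w < x).Nonempty) :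
    upA a b γ w = γ.image a := by
  rw [Finset.not_nonempty_iff_eq_empty] at h
  rw [upA, h]
  have h2 : γ.filter (fun u => u ≤ w) = γ := by
    apply Finset.filter_true_of_mem
    intro x hx
    by_contra hc
    push_neg at hc
    have : x ∈ γ.filter fun x => w < x := Finset.mem_filter.2 ⟨hx, hc⟩
    rw [h] at this
    exact absurd this (Finset.notMem_empty x)
  rw [h2]
  simp

/-- Enumeration of the elements of `γ` from `v` upwards. -/
def ee (γ : Finset V) (v : V) : ℕ → V
  | 0 => v
  | i + 1 => nxt γ (ee γ v i)

lemma ee_zero : ee γ v 0 = v := rfl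

lemma ee_invariant (hv : v ∈ γ) :
    ∀ i ≤ (γ.filter fun x => v < x).card, ee γ v i ∈ γ ∧
      (γ.filter fun x => ee γ v i < x).card = (γ.filter fun x => v < x).card - i := by
  intro i
  induction i with
  | zero => intro _; exact ⟨hv, by rw [Nat.sub_zero]; rfl⟩
  | succ n ih =>
    intro hn
    obtain ⟨hmem, hcard⟩ := ih (by omega)
    have hne : (γ.filter fun x => ee γ v n < x).Nonempty := by
      rw [← Finset.card_pos, hcard]
      omega
    refine ⟨(nxt_spec hne).1, ?_⟩
    show (γ.filter fun x => nxt γ (ee γ v n) < x).card = _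
    rw [card_filter_nxt hne, hcard]
    omega

lemma ee_lt (hv : v ∈ γ) {i : ℕ} (hi : i < (γ.filter fun x => v < x).card) :
    ee γ v i < ee γ v (i + 1) := by
  obtain ⟨hmem, hcard⟩ := ee_invariant hv i (by omega)
  have hne : (γ.filter fun x => ee γ v i < x).Nonempty := by
    rw [← Finset.card_pos, hcard]
    omega
  exact (nxt_spec hne).2.1

lemma ee_ge (hv : v ∈ γ) : ∀ i ≤ (γ.filter fun x => v < x).card, v ≤ ee γ v i ∧
    (1 ≤ i → v < ee γ v i) := by
  intro i
  induction i with
  | zero => intro _; exact ⟨le_refl v, by omega⟩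
  | succ n ih =>
    intro hn
    obtain ⟨h1, _⟩ := ih (by omega)
    have := ee_lt hv (i := n) (by omega)
    exact ⟨le_of_lt (lt_of_le_of_lt h1 this), fun _ => lt_of_le_of_lt h1 this⟩

lemma ee_nxt_min (hv : v ∈ γ) {i : ℕ} (hi : i < (γ.filter fun x => v < x).card) :
    ∀ x ∈ γ, x < ee γ v (i + 1) → x ≤ ee γ v i := by
  obtain ⟨hmem, hcard⟩ := ee_invariant hv i (by omega)
  have hne : (γ.filter fun x => ee γ v i < x).Nonempty := by
    rw [← Finset.card_pos, hcard]
    omega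
  exact nxt_min hne

lemma ee_filter_nonempty (hv : v ∈ γ) {i : ℕ} (hi : i < (γ.filter fun x => v < x).card) :
    (γ.filter fun x => ee γ v i < x).Nonempty := by
  obtain ⟨hmem, hcard⟩ := ee_invariant hv i (by omega)
  rw [← Finset.card_pos, hcard]
  omega

lemma mixB_ee_subset (hv : v ∈ γ) {i : ℕ} (hi : i < (γ.filter fun x => v < x).card) :
    mixB a b γ (ee γ v (i + 1)) ⊆ mixA a b γ (ee γ v i) := by
  have h := upA_eq_mixB_nxt (γ := γ) (w := ee γ v i) (a := a) (b := b)
    (ee_filter_nonempty hv hi)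
  have : mixB a b γ (ee γ v (i+1)) = upA a b γ (ee γ v i) := by
    rw [h]; rfl
  rw [this]
  exact upA_subset_mixA


lemma pull_mono {c : V → U} {σ τ : Finset U} (h : σ ⊆ τ) : pull c σ ⊆ pull c τ := by
  intro x hx
  rw [pull, Finset.mem_filter] at hx ⊢
  exact ⟨hx.1, h hx.2⟩

lemma pull_image {c : V → U} (hc : Function.Injective c) (δ : Finset V) :
    pull c (δ.image c) = δ := by
  ext x
  simp only [pull, Finset.mem_filter, Finset.mem_univ, true_and, Finset.mem_image]
  constructor
  · rintro ⟨y, hy, h⟩; obtain rfl := hc h; exact hy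
  · intro h; exact ⟨x, h, rfl⟩

lemma image_c_inj {c : V → U} (hc : Function.Injective c) {γ δ : Finset V}
    (h : γ.image c = δ.image c) : γ = δ := by
  have := congrArg (pull c) h
  rwa [pull_image hc, pull_image hc] at this

lemma isMin_iff (hne : γ.Nonempty) : isMin γ x ↔ x = γ.min' hne := by
  constructor
  · rintro ⟨hx, hmin⟩
    exact le_antisymm (Finset.le_min' _ _ _ (fun y hy => hmin y hy)) (γ.min'_le x hx)
  · rintro rfl
    exact ⟨γ.min'_mem hne, fun y hy => γ.min'_le y hy⟩

lemma copy_card_GS_a (ha : Function.Injective a) (hab : ∀ u v : V, a u ≠ b v)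
    {K : Set (Finset V)} {t : Finset U} (h : t ∈ copy a K) : (GS a b t).card = t.card := by
  obtain ⟨δ, hδ, rfl⟩ := h
  rw [GS_image_a ha hab, Finset.card_image_of_injective _ ha]

lemma copy_card_GS_b (hb : Function.Injective b) (hab : ∀ u v : V, a u ≠ b v)
    {K : Set (Finset V)} {t : Finset U} (h : t ∈ copy b K) : (GS a b t).card = t.card := by
  obtain ⟨δ, hδ, rfl⟩ := h
  rw [GS_image_b hb hab, Finset.card_image_of_injective _ hb]

lemma mixB_ne_image_b' (ha : Function.Injective a) (hb : Function.Injective b)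
    (hab : ∀ u v : V, a u ≠ b v) {Γ : Finset V} {m : V} (hx : x ∈ Γ) (hm : isMin Γ m)
    (hne : x ≠ m) : mixB a b Γ x ≠ δ.image b := by
  intro h
  have hma : a m ∈ mixB a b Γ x :=
    (a_mem_mixB ha hab).2 ⟨hm.1, lt_of_le_of_ne (hm.2 x hx) (Ne.symm hne)⟩
  exact a_mem_image_b hab (h ▸ hma)

lemma mixA_ne_mixB (ha : Function.Injective a) (hb : Function.Injective b)
    (hab : ∀ u v : V, a u ≠ b v) {Γ : Finset V} {m : V} (hm : m ∈ Γ) (hx : x ∈ γ) :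
    mixA a b Γ m ≠ mixB a b γ x := by
  intro h
  have h1 : a m ∈ mixB a b γ x := h ▸ (a_mem_mixA ha hab).2 ⟨hm, le_refl m⟩
  have h2 : b m ∈ mixB a b γ x := h ▸ (b_mem_mixA hb hab).2 ⟨hm, le_refl m⟩
  have h1' := (a_mem_mixB ha hab).1 h1
  have h2' := (b_mem_mixB hb hab).1 h2
  exact absurd h1'.2 (not_lt.2 h2'.2)

end Aux

section Decode

set_option linter.unusedSectionVars false

variable {V : Type*} {U : Type*} [Fintype V] [LinearOrder V] [LinearOrder U]
variable {A B : Set (Finset V)} {a b c : V → U} {WA WB WC : Set (Finset U × Finset U)}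
variable {γ δ : Finset V} {v w u x : V}

/-- Structural data of the components of a `WC`-pair. -/
lemma WC_pr (hA : IsComplex A)
    (hWC : IsDVF (copy c (A ∩ B)) WC) (hc : Function.Injective c)
    {pr : Finset U × Finset U} (hpr : pr ∈ WC) :
    ∃ δ₁ δ₂ : Finset V, δ₁ ∈ A ∩ B ∧ δ₂ ∈ A ∩ B ∧ pr.1 = δ₁.image c ∧ pr.2 = δ₂.image c ∧
      δ₁ ⊆ δ₂ ∧ δ₂.card = δ₁.card + 1 ∧ pull c pr.1 = δ₁ ∧ pull c pr.2 = δ₂ ∧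
      δ₁.Nonempty ∧ δ₂.Nonempty := by
  obtain ⟨h1, h2, hsub, hcard⟩ := hWC.1 pr hpr
  obtain ⟨δ₁, hδ₁, he1⟩ := h1
  obtain ⟨δ₂, hδ₂, he2⟩ := h2
  have hp1 : pull c pr.1 = δ₁ := by rw [he1, pull_image hc]
  have hp2 : pull c pr.2 = δ₂ := by rw [he2, pull_image hc]
  have hsub' : δ₁ ⊆ δ₂ := by
    rw [← hp1, ← hp2]; exact pull_mono hsub
  have hcard' : δ₂.card = δ₁.card + 1 := by
    rw [← Finset.card_image_of_injective δ₁ hc, ← Finset.card_image_of_injective δ₂ hc,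
      ← he1, ← he2]
    exact hcard
  exact ⟨δ₁, δ₂, hδ₁, hδ₂, he1, he2, hsub', hcard', hp1, hp2,
    (hA.2 δ₁ hδ₁.1).1, (hA.2 δ₂ hδ₂.1).1⟩

lemma WC_unique_snd (hWC : IsDVF (copy c (A ∩ B)) WC) {pr pr' : Finset U × Finset U}
    (h : pr ∈ WC) (h' : pr' ∈ WC) (he : pr.2 = pr'.2) : pr = pr' :=
  hWC.2 pr h pr' h' (Or.inr (Or.inr (Or.inr he)))

lemma WC_unique_fst (hWC : IsDVF (copy c (A ∩ B)) WC) {pr pr' : Finset U × Finset U}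
    (h : pr ∈ WC) (h' : pr' ∈ WC) (he : pr.1 = pr'.1) : pr = pr' :=
  hWC.2 pr h pr' h' (Or.inl he)

lemma WC_fst_ne_snd (hWC : IsDVF (copy c (A ∩ B)) WC) {pr pr' : Finset U × Finset U}
    (h : pr ∈ WC) (h' : pr' ∈ WC) : pr.1 ≠ pr'.2 := by
  intro he
  have := hWC.2 pr h pr' h' (Or.inr (Or.inl he))
  subst this
  have hcard := (hWC.1 pr h).2.2.2
  rw [← he] at hcard
  omega

/-- Decoding a `Wfield`-pair whose second component is `mixA a b γ w`. -/
lemma decode_into (hA : IsComplex A)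
    (ha : Function.Injective a) (hb : Function.Injective b) (hc : Function.Injective c)
    (hab : ∀ u v : V, a u ≠ b v)
    (hWA : IsDVF (copy a A) WA) (hWB : IsDVF (copy b B) WB)
    (hWC : IsDVF (copy c (A ∩ B)) WC)
    (hne : γ.Nonempty) (hw : w ∈ γ) {s : Finset U}
    (h : (s, mixA a b γ w) ∈ Wfield a b c (A ∩ B) WA WB WC) :
    (∃ pr ∈ WC, pr.2 = γ.image c ∧ isMin (pull c pr.1) w ∧
        s = mixA a b (pull c pr.1) w) ∨
    (∃ pr ∈ WC, pr.2 = γ.image c ∧ ∃ u am, isMin (pull c pr.1) am ∧ u ∈ γ ∧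
        u ≠ γ.min' hne ∧ w = (if u = am then γ.min' hne else u) ∧ s = mixB a b γ u) ∨
    (∃ pr ∈ WC, pr.1 = γ.image c ∧ w ≠ γ.min' hne ∧ s = mixB a b γ w) ∨
    (IsCritical WC (γ.image c) ∧ w ≠ γ.min' hne ∧ s = mixB a b γ w) := by
  rcases h with (h | h) | h
  · exfalso
    obtain ⟨δ', _, he⟩ := (hWA.1 _ h).2.1
    exact mixA_ne_image_a hb hab hw he
  · exfalso
    obtain ⟨δ', _, he⟩ := (hWB.1 _ h).2.1
    exact mixA_ne_image_b ha hab hw he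
  simp only [WprimeSet, Set.mem_union, Set.mem_setOf_eq] at h
  rcases h with ((⟨pr, hpr, m, hm, hp⟩ | ⟨pr, hpr, y, vm', am, hvm', ham, hy, hyne, hp⟩) |
    ⟨pr, hpr, y, am, ham, hy, hyne, hp⟩) | ⟨γ', hγ', hcrit, y, vm', hvm', hy, hyne, hp⟩
  · -- piece 1
    obtain ⟨δ₁, δ₂, hδ₁, hδ₂, he1, he2, hsub, hcard, hp1, hp2, hne₁, hne₂⟩ :=
      WC_pr hA hWC hc hpr
    have heq := congrArg Prod.snd hp
    simp only at heq
    have hmem : m ∈ pull c pr.2 := by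
      rw [hp1] at hm; rw [hp2]; exact hsub hm.1
    obtain ⟨hγeq, hmw⟩ := mixA_inj ha hb hab hmem hw heq.symm
    rw [hp2] at hγeq
    have hγδ : γ = δ₂ := hγeq.symm
    subst hmw
    left
    refine ⟨pr, hpr, by rw [he2, hγδ], hm, ?_⟩
    have hfst := congrArg Prod.fst hp
    simp only at hfst
    exact hfst
  · -- piece 2
    obtain ⟨δ₁, δ₂, hδ₁, hδ₂, he1, he2, hsub, hcard, hp1, hp2, hne₁, hne₂⟩ :=
      WC_pr hA hWC hc hpr
    have heq := congrArg Prod.snd hp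
    simp only at heq
    have hymem : (if y = am then vm' else y) ∈ pull c pr.2 := by
      split
      · exact hvm'.1
      · exact hy
    obtain ⟨hγeq, hww⟩ := mixA_inj ha hb hab hymem hw heq.symm
    rw [hp2] at hγeq
    have hγδ : γ = δ₂ := hγeq.symm
    right; left
    have hvm'' : vm' = γ.min' hne := by
      rw [← isMin_iff hne, hγδ, ← hp2]
      exact hvm'
    refine ⟨pr, hpr, by rw [he2, hγδ], y, am, ham, ?_, ?_, ?_, ?_⟩
    · rw [hγδ, ← hp2]; exact hy
    · rw [← hvm'']; exact hyne
    · rw [← hww, ← hvm'']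
    · have hfst := congrArg Prod.fst hp
      simp only at hfst
      rw [hfst, hp2, ← hγδ]
  · -- piece 3
    obtain ⟨δ₁, δ₂, hδ₁, hδ₂, he1, he2, hsub, hcard, hp1, hp2, hne₁, hne₂⟩ :=
      WC_pr hA hWC hc hpr
    have heq := congrArg Prod.snd hp
    simp only at heq
    obtain ⟨hγeq, hww⟩ := mixA_inj ha hb hab hy hw heq.symm
    rw [hp1] at hγeq
    have hγδ : γ = δ₁ := hγeq.symm
    right; right; left
    have ham' : am = γ.min' hne := by
      rw [← isMin_iff hne, hγδ, ← hp1]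
      exact ham
    refine ⟨pr, hpr, by rw [he1, hγδ], ?_, ?_⟩
    · rw [← ham', ← hww]; exact hyne
    · have hfst := congrArg Prod.fst hp
      simp only at hfst
      rw [hfst, hp1, ← hγδ, hww]
  · -- piece 4
    have heq := congrArg Prod.snd hp
    simp only at heq
    obtain ⟨hγeq, hww⟩ := mixA_inj ha hb hab hy hw heq.symm
    have hγδ : γ = γ' := hγeq.symm
    right; right; right
    have hvm'' : vm' = γ.min' hne := by
      rw [← isMin_iff hne, hγδ]; exact hvm'
    refine ⟨by rw [hγδ]; exact hcrit, ?_, ?_⟩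
    · rw [← hvm'', ← hww]; exact hyne
    · have hfst := congrArg Prod.fst hp
      simp only at hfst
      rw [hfst, ← hγδ, hww]

/-- Decoding a `Wfield`-pair whose first component is `mixB a b γ u` with `u ∈ γ`. -/
lemma decode_outof (hA : IsComplex A)
    (ha : Function.Injective a) (hb : Function.Injective b) (hc : Function.Injective c)
    (hab : ∀ u v : V, a u ≠ b v)
    (hWA : IsDVF (copy a A) WA) (hWB : IsDVF (copy b B) WB)
    (hWC : IsDVF (copy c (A ∩ B)) WC)
    (hne : γ.Nonempty) (hu : u ∈ γ) {t : Finset U}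
    (h : (mixB a b γ u, t) ∈ Wfield a b c (A ∩ B) WA WB WC) :
    (u = γ.min' hne ∧ t ∈ copy b B) ∨
    (∃ pr ∈ WC, pr.2 = γ.image c ∧ ∃ am, isMin (pull c pr.1) am ∧ u ≠ γ.min' hne ∧
        t = mixA a b γ (if u = am then γ.min' hne else u)) ∨
    (∃ pr ∈ WC, pr.1 = γ.image c ∧ u ≠ γ.min' hne ∧ t = mixA a b γ u) ∨
    (IsCritical WC (γ.image c) ∧ u ≠ γ.min' hne ∧ t = mixA a b γ u) := by
  rcases h with (h | h) | h
  · exfalso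
    obtain ⟨δ', _, he⟩ := (hWA.1 _ h).1
    exact mixB_ne_image_a hb hab hu he
  · -- WB : possible only if u = min
    left
    have hmem := (hWB.1 _ h).1
    obtain ⟨δ', hδ', he⟩ := hmem
    have he' : mixB a b γ u = δ'.image b := he
    by_cases hmin : u = γ.min' hne
    · exact ⟨hmin, (hWB.1 _ h).2.1⟩
    · exfalso
      have hvm : γ.min' hne < u :=
        lt_of_le_of_ne (γ.min'_le u hu) (Ne.symm hmin)
      have hmem2 : a (γ.min' hne) ∈ mixB a b γ u :=
        (a_mem_mixB ha hab).2 ⟨γ.min'_mem hne, hvm⟩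
      rw [he'] at hmem2
      exact a_mem_image_b hab hmem2
  simp only [WprimeSet, Set.mem_union, Set.mem_setOf_eq] at h
  rcases h with ((⟨pr, hpr, m, hm, hp⟩ | ⟨pr, hpr, y, vm', am, hvm', ham, hy, hyne, hp⟩) |
    ⟨pr, hpr, y, am, ham, hy, hyne, hp⟩) | ⟨γ', hγ', hcrit, y, vm', hvm', hy, hyne, hp⟩
  · -- piece 1 : impossible
    exfalso
    have heq := congrArg Prod.fst hp
    simp only at heq
    exact mixA_ne_mixB ha hb hab hm.1 hu heq.symm
  · -- piece 2
    obtain ⟨δ₁, δ₂, hδ₁, hδ₂, he1, he2, hsub, hcard, hp1, hp2, hne₁, hne₂⟩ :=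
      WC_pr hA hWC hc hpr
    have heq := congrArg Prod.fst hp
    simp only at heq
    obtain ⟨hγeq, hyu⟩ := mixB_inj ha hb hab hy hu heq.symm
    rw [hp2] at hγeq
    have hγδ : γ = δ₂ := hγeq.symm
    right; left
    have hvm'' : vm' = γ.min' hne := by
      rw [← isMin_iff hne, hγδ, ← hp2]
      exact hvm'
    refine ⟨pr, hpr, by rw [he2, hγδ], am, ham, ?_, ?_⟩
    · rw [← hvm'', ← hyu]; exact hyne
    · have hsnd := congrArg Prod.snd hp
      simp only at hsnd
      rw [hsnd, hp2, ← hγδ, hyu, hvm'']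
  · -- piece 3
    obtain ⟨δ₁, δ₂, hδ₁, hδ₂, he1, he2, hsub, hcard, hp1, hp2, hne₁, hne₂⟩ :=
      WC_pr hA hWC hc hpr
    have heq := congrArg Prod.fst hp
    simp only at heq
    obtain ⟨hγeq, hyu⟩ := mixB_inj ha hb hab hy hu heq.symm
    rw [hp1] at hγeq
    have hγδ : γ = δ₁ := hγeq.symm
    right; right; left
    have ham' : am = γ.min' hne := by
      rw [← isMin_iff hne, hγδ, ← hp1]
      exact ham
    refine ⟨pr, hpr, by rw [he1, hγδ], ?_, ?_⟩
    · rw [← ham', ← hyu]; exact hyne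
    · have hsnd := congrArg Prod.snd hp
      simp only at hsnd
      rw [hsnd, hp1, ← hγδ, hyu]
  · -- piece 4
    have heq := congrArg Prod.fst hp
    simp only at heq
    obtain ⟨hγeq, hyu⟩ := mixB_inj ha hb hab hy hu heq.symm
    have hγδ : γ = γ' := hγeq.symm
    right; right; right
    have hvm'' : vm' = γ.min' hne := by
      rw [← isMin_iff hne, hγδ]; exact hvm'
    refine ⟨by rw [hγδ]; exact hcrit, ?_, ?_⟩
    · rw [← hvm'', ← hyu]; exact hyne
    · have hsnd := congrArg Prod.snd hp
      simp only at hsnd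
      rw [hsnd, ← hγδ, hyu]

/-- Decoding a `Wfield`-pair whose first component is `γ.image a`. -/
lemma decode_imga (hA : IsComplex A)
    (ha : Function.Injective a) (hb : Function.Injective b)
    (hab : ∀ u v : V, a u ≠ b v)
    (hWA : IsDVF (copy a A) WA) (hWB : IsDVF (copy b B) WB)
    (hne : γ.Nonempty) {t : Finset U}
    (h : (γ.image a, t) ∈ Wfield a b c (A ∩ B) WA WB WC) : t ∈ copy a A := by
  rcases h with (h | h) | h
  · exact (hWA.1 _ h).2.1
  · exfalso
    obtain ⟨δ', hδ', he⟩ := (hWB.1 _ h).1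
    exact image_a_ne_image_b hab hne he
  · exfalso
    simp only [WprimeSet, Set.mem_union, Set.mem_setOf_eq] at h
    rcases h with ((⟨pr, hpr, m, hm, hp⟩ | ⟨pr, hpr, y, vm', am, hvm', ham, hy, hyne, hp⟩) |
      ⟨pr, hpr, y, am, ham, hy, hyne, hp⟩) | ⟨γ', hγ', hcrit, y, vm', hvm', hy, hyne, hp⟩
    · have heq := congrArg Prod.fst hp
      simp only at heq
      exact mixA_ne_image_a hb hab hm.1 heq.symm
    · have heq := congrArg Prod.fst hp
      simp only at heq
      exact mixB_ne_image_a hb hab hy heq.symm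
    · have heq := congrArg Prod.fst hp
      simp only at heq
      exact mixB_ne_image_a hb hab hy heq.symm
    · have heq := congrArg Prod.fst hp
      simp only at heq
      exact mixB_ne_image_a hb hab hy heq.symm

end Decode



section Local

set_option linter.unusedSectionVars false

variable {V : Type*} {U : Type*} [Fintype V] [LinearOrder V] [LinearOrder U]

/-- The local structure of the vector field `Wf` inside the prism block over a ground
simplex `γ` with minimum `vm`.  `tw = some u` records a "twisted" pairing
`(mixB γ u, mixA γ vm)`. -/
structure LocalData (a b : V → U) (Wf : Set (Finset U × Finset U)) (γ : Finset V) (vm : V)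
    (tw : Option V) : Prop where
  pairs_std : ∀ u ∈ γ, u ≠ vm → tw ≠ some u → (mixB a b γ u, mixA a b γ u) ∈ Wf
  pairs_tw : ∀ u, tw = some u → (mixB a b γ u, mixA a b γ vm) ∈ Wf
  tw_mem : ∀ u, tw = some u → u ∈ γ ∧ u ≠ vm ∧ ∀ x ∈ γ, vm < x → u ≤ x
  into : ∀ s w, w ∈ γ → (s, mixA a b γ w) ∈ Wf →
      (w ≠ vm ∧ tw ≠ some w ∧ s = mixB a b γ w) ∨
      (∃ u, tw = some u ∧ w = vm ∧ s = mixB a b γ u) ∨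
      (((tw = Option.none ∧ w = vm) ∨ tw = some w) ∧ GS a b s ≠ γ)
  outof : ∀ u t, u ∈ γ → u ≠ vm → (mixB a b γ u, t) ∈ Wf →
      (tw ≠ some u ∧ t = mixA a b γ u) ∨ (tw = some u ∧ t = mixA a b γ vm)
  outof_min : ∀ t, (mixB a b γ vm, t) ∈ Wf → (GS a b t).card = t.card
  outof_imga : ∀ t, (γ.image a, t) ∈ Wf → (GS a b t).card = t.card

variable {A B : Set (Finset V)} {a b c : V → U} {WA WB WC : Set (Finset U × Finset U)}
variable {γ δ : Finset V} {v w u x : V}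

lemma build_LocalData (hA : IsComplex A)
    (ha : Function.Injective a) (hb : Function.Injective b) (hc : Function.Injective c)
    (hab : ∀ u v : V, a u ≠ b v)
    (hWA : IsDVF (copy a A) WA) (hWB : IsDVF (copy b B) WB)
    (hWC : IsDVF (copy c (A ∩ B)) WC)
    (hγ : γ ∈ A ∩ B) (hne : γ.Nonempty) :
    ∃ tw : Option V, LocalData a b (Wfield a b c (A ∩ B) WA WB WC) γ (γ.min' hne) tw := by
  set vm := γ.min' hne with hvm
  have houtof_min : ∀ t, (mixB a b γ vm, t) ∈ Wfield a b c (A ∩ B) WA WB WC →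
      (GS a b t).card = t.card := by
    intro t h
    rcases decode_outof hA ha hb hc hab hWA hWB hWC hne (γ.min'_mem hne) h with
      ⟨_, hcopy⟩ | ⟨pr, _, _, am, _, hne', _⟩ | ⟨pr, _, _, hne', _⟩ | ⟨_, hne', _⟩
    · exact copy_card_GS_b hb hab hcopy
    all_goals exact absurd rfl hne'
  have houtof_imga : ∀ t, (γ.image a, t) ∈ Wfield a b c (A ∩ B) WA WB WC →
      (GS a b t).card = t.card := by
    intro t h
    exact copy_card_GS_a ha hab (decode_imga hA ha hb hab hWA hWB hne h)
  by_cases hcrit : IsCritical WC (γ.image c)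
  · -- status: critical
    refine ⟨none, ?_, ?_, ?_, ?_, ?_, houtof_min, houtof_imga⟩
    · intro u hu hune _
      refine Set.mem_union_right _ (Set.mem_union_right _ ?_)
      exact ⟨γ, hγ, hcrit, u, vm, (isMin_iff hne).2 hvm, hu, hune, rfl⟩
    · intro u h; simp at h
    · intro u h; simp at h
    · intro s w hw h
      rcases decode_into hA ha hb hc hab hWA hWB hWC hne hw h with
        ⟨pr, hpr, h2, _, _⟩ | ⟨pr, hpr, h2, _⟩ | ⟨pr, hpr, h1, _⟩ | ⟨_, hwne, hs⟩
      · exact absurd h2 (hcrit pr hpr).2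
      · exact absurd h2 (hcrit pr hpr).2
      · exact absurd h1 (hcrit pr hpr).1
      · exact Or.inl ⟨hwne, by simp, hs⟩
    · intro u t hu hune h
      rcases decode_outof hA ha hb hc hab hWA hWB hWC hne hu h with
        ⟨heq, _⟩ | ⟨pr, hpr, h2, _⟩ | ⟨pr, hpr, h1, _⟩ | ⟨_, _, ht⟩
      · exact absurd heq hune
      · exact absurd h2 (hcrit pr hpr).2
      · exact absurd h1 (hcrit pr hpr).1
      · exact Or.inl ⟨by simp, ht⟩
  · -- not critical : some pair contains γ.image c
    rw [IsCritical] at hcrit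
    push_neg at hcrit
    obtain ⟨pr, hpr, hor⟩ := hcrit
    have hor' : pr.1 = γ.image c ∨ pr.2 = γ.image c := by
      by_cases hh : pr.1 = γ.image c
      · exact Or.inl hh
      · exact Or.inr (hor hh)
    clear hor
    rcases hor' with h1 | h2
    · -- status: first component (FI)
      have hp1γ : pull c pr.1 = γ := by rw [h1, pull_image hc]
      refine ⟨none, ?_, ?_, ?_, ?_, ?_, houtof_min, houtof_imga⟩
      · intro u hu hune _
        refine Set.mem_union_right _
          (Set.mem_union_left _ (Set.mem_union_right _ ?_))
        refine ⟨pr, hpr, u, vm, ?_, ?_, hune, ?_⟩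
        · rw [hp1γ]; exact (isMin_iff hne).2 hvm
        · rw [hp1γ]; exact hu
        · rw [hp1γ]
      · intro u h; simp at h
      · intro u h; simp at h
      · intro s w hw h
        rcases decode_into hA ha hb hc hab hWA hWB hWC hne hw h with
          ⟨pr', hpr', h2', _, _⟩ | ⟨pr', hpr', h2', _⟩ | ⟨pr', hpr', h1', hwne, hs⟩ |
          ⟨hcr, _, _⟩
        · exact absurd (h1.trans h2'.symm) (WC_fst_ne_snd hWC hpr hpr')
        · exact absurd (h1.trans h2'.symm) (WC_fst_ne_snd hWC hpr hpr')
        · exact Or.inl ⟨hwne, by simp, hs⟩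
        · exact absurd h1 (hcr pr hpr).1
      · intro u t hu hune h
        rcases decode_outof hA ha hb hc hab hWA hWB hWC hne hu h with
          ⟨heq, _⟩ | ⟨pr', hpr', h2', _⟩ | ⟨pr', hpr', h1', _, ht⟩ | ⟨hcr, _, _⟩
        · exact absurd heq hune
        · exact absurd (h1.trans h2'.symm) (WC_fst_ne_snd hWC hpr hpr')
        · exact Or.inl ⟨by simp, ht⟩
        · exact absurd h1 (hcr pr hpr).1
    · -- status: second component (SE)
      obtain ⟨δ₁, δ₂, hδ₁, hδ₂, he1, he2, hsubδ, hcardδ, hp1, hp2, hne₁, hne₂⟩ :=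
        WC_pr hA hWC hc hpr
      obtain rfl : γ = δ₂ := (image_c_inj hc (he2.symm.trans h2)).symm
      have hp2γ : pull c pr.2 = γ := hp2
      have hδ₁ne : δ₁ ≠ γ := by
        intro hEq
        rw [hEq] at hcardδ
        omega
      set am := δ₁.min' hne₁ with ham
      have hamδ : am ∈ δ₁ := δ₁.min'_mem hne₁
      have hamγ : am ∈ γ := hsubδ hamδ
      have hGSne : GS a b (mixA a b δ₁ am) ≠ γ := by
        rw [GS_mixA ha hb hab]; exact hδ₁ne
      have huniq2 : ∀ pr' ∈ WC, pr'.2 = γ.image c → pr' = pr := fun pr' hpr' h2' =>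
        WC_unique_snd hWC hpr' hpr (h2'.trans h2.symm)
      have huniq1 : ∀ pr' ∈ WC, pr'.1 = γ.image c → False := fun pr' hpr' h1' =>
        (WC_fst_ne_snd hWC hpr' hpr) (h1'.trans h2.symm)
      have hcritF : IsCritical WC (γ.image c) → False := fun hcr => (hcr pr hpr).2 h2
      by_cases hvmem : vm ∈ δ₁
      · -- untwisted (SEU) : am = vm
        have hamvm : am = vm := le_antisymm (δ₁.min'_le vm hvmem)
          (Finset.le_min' _ _ _ (fun y hy => γ.min'_le y (hsubδ hy)))
        refine ⟨none, ?_, ?_, ?_, ?_, ?_, houtof_min, houtof_imga⟩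
        · intro u hu hune _
          refine Set.mem_union_right _
            (Set.mem_union_left _ (Set.mem_union_left _ (Set.mem_union_right _ ?_)))
          refine ⟨pr, hpr, u, vm, am, ?_, ?_, ?_, hune, ?_⟩
          · rw [hp2γ]; exact (isMin_iff hne).2 hvm
          · rw [hp1]; exact (isMin_iff hne₁).2 ham
          · rw [hp2γ]; exact hu
          · rw [hp2γ, if_neg (fun hEq => hune (hEq.trans hamvm))]
        · intro u h; simp at h
        · intro u h; simp at h
        · intro s w hw h
          rcases decode_into hA ha hb hc hab hWA hWB hWC hne hw h with
            ⟨pr', hpr', h2', hmin', hs⟩ | ⟨pr', hpr', h2', u, am', hmin', hu, hune, hwif, hs⟩ |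
            ⟨pr', hpr', h1', _, _⟩ | ⟨hcr, _, _⟩
          · obtain rfl := huniq2 pr' hpr' h2'
            rw [hp1] at hmin'
            have hwam : w = am := (isMin_iff hne₁).1 hmin'
            right; right
            refine ⟨Or.inl ⟨rfl, hwam.trans hamvm⟩, ?_⟩
            rw [hs, hp1, hwam]
            exact hGSne
          · obtain rfl := huniq2 pr' hpr' h2'
            rw [hp1] at hmin'
            have ham' : am' = am := ((isMin_iff hne₁).1 hmin').trans ham.symm
            have huam : u ≠ am' := fun hEq => hune (hEq.trans (ham'.trans hamvm))
            rw [if_neg huam] at hwif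
            subst hwif
            exact Or.inl ⟨hune, by simp, hs⟩
          · exact (huniq1 pr' hpr' h1').elim
          · exact (hcritF hcr).elim
        · intro u t hu hune h
          rcases decode_outof hA ha hb hc hab hWA hWB hWC hne hu h with
            ⟨heq, _⟩ | ⟨pr', hpr', h2', am', hmin', _, ht⟩ | ⟨pr', hpr', h1', _, _⟩ |
            ⟨hcr, _, _⟩
          · exact absurd heq hune
          · obtain rfl := huniq2 pr' hpr' h2'
            rw [hp1] at hmin'
            have ham' : am' = am := ((isMin_iff hne₁).1 hmin').trans ham.symm
            have huam : u ≠ am' := fun hEq => hune (hEq.trans (ham'.trans hamvm))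
            rw [if_neg huam] at ht
            exact Or.inl ⟨by simp, ht⟩
          · exact (huniq1 pr' hpr' h1').elim
          · exact (hcritF hcr).elim
      · -- twisted (SET) : vm ∉ δ₁
        have hamne : am ≠ vm := fun hEq => hvmem (hEq ▸ hamδ)
        have hδ₁e : δ₁ = γ.erase vm := by
          apply Finset.eq_of_subset_of_card_le
          · intro y hy
            exact Finset.mem_erase.2 ⟨fun hEq => hvmem (hEq ▸ hy), hsubδ hy⟩
          · rw [Finset.card_erase_of_mem (γ.min'_mem hne)]
            omega
        have htwmin : ∀ x ∈ γ, vm < x → am ≤ x := by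
          intro y hy hvy
          apply δ₁.min'_le
          rw [hδ₁e, Finset.mem_erase]
          exact ⟨ne_of_gt hvy, hy⟩
        refine ⟨some am, ?_, ?_, ?_, ?_, ?_, houtof_min, houtof_imga⟩
        · intro u hu hune htw
          have huam : u ≠ am := fun hEq => htw (by rw [hEq])
          refine Set.mem_union_right _
            (Set.mem_union_left _ (Set.mem_union_left _ (Set.mem_union_right _ ?_)))
          refine ⟨pr, hpr, u, vm, am, ?_, ?_, ?_, hune, ?_⟩
          · rw [hp2γ]; exact (isMin_iff hne).2 hvm
          · rw [hp1]; exact (isMin_iff hne₁).2 ham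
          · rw [hp2γ]; exact hu
          · rw [hp2γ, if_neg huam]
        · intro u htw
          obtain rfl : am = u := by injection htw
          refine Set.mem_union_right _
            (Set.mem_union_left _ (Set.mem_union_left _ (Set.mem_union_right _ ?_)))
          refine ⟨pr, hpr, am, vm, am, ?_, ?_, ?_, hamne, ?_⟩
          · rw [hp2γ]; exact (isMin_iff hne).2 hvm
          · rw [hp1]; exact (isMin_iff hne₁).2 ham
          · rw [hp2γ]; exact hamγ
          · rw [hp2γ, if_pos rfl]
        · intro u htw
          obtain rfl : am = u := by injection htw
          exact ⟨hamγ, hamne, htwmin⟩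
        · intro s w hw h
          rcases decode_into hA ha hb hc hab hWA hWB hWC hne hw h with
            ⟨pr', hpr', h2', hmin', hs⟩ | ⟨pr', hpr', h2', u, am', hmin', hu, hune, hwif, hs⟩ |
            ⟨pr', hpr', h1', _, _⟩ | ⟨hcr, _, _⟩
          · obtain rfl := huniq2 pr' hpr' h2'
            rw [hp1] at hmin'
            have hwam : w = am := (isMin_iff hne₁).1 hmin'
            right; right
            refine ⟨Or.inr (by rw [hwam]), ?_⟩
            rw [hs, hp1, hwam]
            exact hGSne
          · obtain rfl := huniq2 pr' hpr' h2'
            rw [hp1] at hmin'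
            have ham' : am' = am := ((isMin_iff hne₁).1 hmin').trans ham.symm
            rw [ham'] at hwif
            by_cases huam : u = am
            · rw [if_pos huam] at hwif
              right; left
              exact ⟨u, by rw [huam], hwif, hs⟩
            · rw [if_neg huam] at hwif
              subst hwif
              exact Or.inl ⟨hune, fun hEq => huam (Option.some_injective _ hEq).symm, hs⟩
          · exact (huniq1 pr' hpr' h1').elim
          · exact (hcritF hcr).elim
        · intro u t hu hune h
          rcases decode_outof hA ha hb hc hab hWA hWB hWC hne hu h with
            ⟨heq, _⟩ | ⟨pr', hpr', h2', am', hmin', _, ht⟩ | ⟨pr', hpr', h1', _, _⟩ |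
            ⟨hcr, _, _⟩
          · exact absurd heq hune
          · obtain rfl := huniq2 pr' hpr' h2'
            rw [hp1] at hmin'
            have ham' : am' = am := ((isMin_iff hne₁).1 hmin').trans ham.symm
            rw [ham'] at ht
            by_cases huam : u = am
            · rw [if_pos huam] at ht
              exact Or.inr ⟨by rw [huam], ht⟩
            · rw [if_neg huam] at ht
              exact Or.inl ⟨fun hEq => huam (Option.some_injective _ hEq).symm, ht⟩
          · exact (huniq1 pr' hpr' h1').elim
          · exact (hcritF hcr).elim

end Local


section Walk

set_option linter.unusedSectionVars false

variable {V : Type*} {U : Type*} [Fintype V] [LinearOrder V] [LinearOrder U]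
variable {a b : V → U} {γ : Finset V} {v w u x : V}

lemma extTraj_ext {W : Set (Finset U × Finset U)} {P Q : ExtTraj W}
    (hk : P.k = Q.k) (ht : P.t = Q.t) (hs : P.s = Q.s) : P = Q := by
  obtain ⟨k₁, t₁, s₁, _, _, _, _, _, _, _⟩ := P
  obtain ⟨k₂, t₂, s₂, _, _, _, _, _, _, _⟩ := Q
  simp only at hk ht hs
  subst hk; subst ht; subst hs
  rfl

lemma ee_top (hv : v ∈ γ) :
    ∀ x ∈ γ, x ≤ ee γ v ((γ.filter fun y => v < y).card) := by
  intro x hx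
  by_contra hc
  push_neg at hc
  have hcard := (ee_invariant hv _ (le_refl _)).2
  rw [Nat.sub_self] at hcard
  have hmem : x ∈ γ.filter fun y => ee γ v ((γ.filter fun y => v < y).card) < y :=
    Finset.mem_filter.2 ⟨hx, hc⟩
  rw [Finset.card_eq_zero.1 hcard] at hmem
  exact absurd hmem (Finset.notMem_empty x)

lemma H1_forces {Wf : Set (Finset U × Finset U)}
    (ha : Function.Injective a) (hb : Function.Injective b) (hab : ∀ u v : V, a u ≠ b v)
    (hne : γ.Nonempty) {tw : Option V}
    (LD : LocalData a b Wf γ (γ.min' hne) tw) (hv : v ∈ γ)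
    (H1 : IsCritical Wf (mixA a b γ v) ∨
      ∃ σ₁, (σ₁, mixA a b γ v) ∈ Wf ∧ GS a b σ₁ ≠ GS a b (mixA a b γ v)) :
    (tw = none ∧ v = γ.min' hne) ∨ tw = some v := by
  set vm := γ.min' hne with hvm
  match htw : tw with
  | Option.none =>
    left
    refine ⟨rfl, ?_⟩
    by_contra hvne
    have hpair := LD.pairs_std v hv hvne (by simp)
    rcases H1 with hcrit | ⟨σ₁, hmem, hGSne⟩
    · exact (hcrit _ hpair).2 rfl
    · rcases LD.into σ₁ v hv hmem with ⟨_, _, hs⟩ | ⟨u, htweq, _, _⟩ |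
        ⟨(⟨_, hveq⟩ | htweq), _⟩
      · rw [hs, GS_mixB ha hb hab, GS_mixA ha hb hab] at hGSne
        exact hGSne rfl
      · exact nomatch htweq
      · exact hvne hveq
      · exact nomatch htweq
  | Option.some u =>
    right
    congr 1
    by_contra huv
    by_cases hveq : v = vm
    · have hpair := LD.pairs_tw u rfl
      rw [← hveq] at hpair
      rcases H1 with hcrit | ⟨σ₁, hmem, hGSne⟩
      · exact (hcrit _ hpair).2 rfl
      · rcases LD.into σ₁ v hv hmem with ⟨hvne, _, _⟩ | ⟨u', htweq, _, hs⟩ |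
          ⟨(⟨hn, _⟩ | htweq), _⟩
        · exact hvne hveq
        · rw [hs, GS_mixB ha hb hab, GS_mixA ha hb hab] at hGSne
          exact hGSne rfl
        · exact nomatch hn
        · exact huv (Option.some_injective _ htweq)
    · have hpair := LD.pairs_std v hv hveq
        (fun hEq => huv (Option.some_injective _ hEq))
      rcases H1 with hcrit | ⟨σ₁, hmem, hGSne⟩
      · exact (hcrit _ hpair).2 rfl
      · rcases LD.into σ₁ v hv hmem with ⟨_, _, hs⟩ | ⟨u', _, hveq', _⟩ |
          ⟨(⟨hn, _⟩ | htweq), _⟩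
        · rw [hs, GS_mixB ha hb hab, GS_mixA ha hb hab] at hGSne
          exact hGSne rfl
        · exact hveq hveq'
        · exact nomatch hn
        · exact huv (Option.some_injective _ htweq)

lemma facet_step {Wf : Set (Finset U × Finset U)}
    (ha : Function.Injective a) (hb : Function.Injective b) (hab : ∀ u v : V, a u ≠ b v)
    (P : ExtTraj Wf) (hcard0 : (P.t 0).card = γ.card + 1)
    {i : ℕ} (hik : i + 1 ≤ P.k + 1)
    (hGsi : GS a b (P.s (i + 1)) = γ)
    (hw : w ∈ γ) (hti : P.t i = mixA a b γ w) :
    P.s (i + 1) = mixB a b γ w ∨ P.s (i + 1) = upA a b γ w := by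
  apply facet_classify ha hb hab hw
  · have hsub := P.sub (i + 1) (by omega) hik
    rwa [Nat.add_sub_cancel, hti] at hsub
  · have hdim := P.dim_s (i + 1) (by omega) hik
    rw [hcard0] at hdim
    omega
  · exact hGsi

lemma from_vm_terminal {Wf : Set (Finset U × Finset U)}
    (ha : Function.Injective a) (hb : Function.Injective b) (hab : ∀ u v : V, a u ≠ b v)
    (hne : γ.Nonempty) {tw : Option V} {u : V}
    (LD : LocalData a b Wf γ (γ.min' hne) tw) (htwu : tw = some u)
    (P : ExtTraj Wf) (hcard0 : (P.t 0).card = γ.card + 1)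
    (hGt : ∀ i ≤ P.k, GS a b (P.t i) = γ)
    (hGs : ∀ i, 1 ≤ i → i ≤ P.k + 1 → GS a b (P.s i) = γ)
    {j : ℕ} (hj : j < P.k) (htj : P.t j = mixA a b γ (γ.min' hne)) : False := by
  set vm := γ.min' hne with hvm
  have hvmγ : vm ∈ γ := γ.min'_mem hne
  obtain ⟨huγ, hune, humin⟩ := LD.tw_mem u htwu
  have hulty : vm < u := lt_of_le_of_ne (γ.min'_le u huγ) (Ne.symm hune)
  have hfil : (γ.filter fun x => vm < x).Nonempty :=
    ⟨u, Finset.mem_filter.2 ⟨huγ, hulty⟩⟩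
  have hnxtu : nxt γ vm = u := le_antisymm
    ((nxt_spec hfil).2.2 u huγ hulty)
    (humin _ (nxt_spec hfil).1 (nxt_spec hfil).2.1)
  rcases facet_step ha hb hab P hcard0 (by omega) (hGs (j + 1) (by omega) (by omega))
      hvmγ htj with hs | hs
  · have hmem := P.mem (j + 1) (by omega) (by omega)
    rw [hs] at hmem
    have hGScard := LD.outof_min _ hmem
    rw [hGt (j + 1) (by omega)] at hGScard
    have hc := P.dim_t (j + 1) (by omega)
    rw [hcard0] at hc
    omega
  · rw [upA_eq_mixB_nxt hfil, hnxtu] at hs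
    have hnm := P.nmem (j + 1) (by omega) (by omega)
    rw [Nat.add_sub_cancel, hs, htj] at hnm
    exact hnm (LD.pairs_tw u htwu)

lemma forced_walk {Wf : Set (Finset U × Finset U)}
    (ha : Function.Injective a) (hb : Function.Injective b) (hab : ∀ u v : V, a u ≠ b v)
    (hne : γ.Nonempty) {tw : Option V}
    (LD : LocalData a b Wf γ (γ.min' hne) tw) (hv : v ∈ γ)
    (htw : (tw = none ∧ v = γ.min' hne) ∨ tw = some v)
    (P : ExtTraj Wf) (ht0 : P.t 0 = mixA a b γ v)
    (hGt : ∀ i ≤ P.k, GS a b (P.t i) = γ)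
    (hGs : ∀ i, 1 ≤ i → i ≤ P.k + 1 → GS a b (P.s i) = γ)
    (hleft : 1 ≤ P.k → P.s 1 ≠ mixB a b γ v) :
    ∀ i ≤ P.k, i ≤ (γ.filter fun x => v < x).card ∧ P.t i = mixA a b γ (ee γ v i) ∧
      (1 ≤ i → P.s i = mixB a b γ (ee γ v i)) := by
  set vm := γ.min' hne with hvm
  set m := (γ.filter fun x => v < x).card with hm
  have hcard0 : (P.t 0).card = γ.card + 1 := by rw [ht0, card_mixA ha hb hab hv]
  have hvge : vm ≤ v := γ.min'_le v hv
  intro i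
  induction i with
  | zero =>
    intro _
    exact ⟨Nat.zero_le m, ht0, by omega⟩
  | succ n ih =>
    intro hnk
    obtain ⟨hnm, htn, _⟩ := ih (by omega)
    have heγ : ee γ v n ∈ γ := (ee_invariant hv n hnm).1
    have hgev : v ≤ ee γ v n := (ee_ge hv n hnm).1
    rcases facet_step ha hb hab P hcard0 (by omega) (hGs (n + 1) (by omega) (by omega))
        heγ htn with hs | hs
    · -- downward facet : impossible
      exfalso
      rcases Nat.eq_zero_or_pos n with rfl | hn
      · exact hleft (by omega) hs
      · have hgt : v < ee γ v n := (ee_ge hv n hnm).2 hn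
        have hnvm : ee γ v n ≠ vm := ne_of_gt (lt_of_le_of_lt hvge hgt)
        have hmem := P.mem (n + 1) (by omega) (by omega)
        rw [hs] at hmem
        rcases LD.outof _ _ heγ hnvm hmem with ⟨_, hteq⟩ | ⟨htweq, _⟩
        · have hnm' := P.nmem (n + 1) (by omega) (by omega)
          rw [Nat.add_sub_cancel, hs, htn] at hnm'
          rw [hteq] at hmem
          exact hnm' hmem
        · rcases htw with ⟨h0, _⟩ | hsv
          · rw [h0] at htweq; exact nomatch htweq
          · exact absurd (Option.some_injective _ (hsv.symm.trans htweq)) (ne_of_lt hgt)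
    · -- upward facet
      by_cases hfil : (γ.filter fun x => ee γ v n < x).Nonempty
      · rw [upA_eq_mixB_nxt hfil] at hs
        have hnm1 : n < m := by
          have hcard := (ee_invariant hv n hnm).2
          have hpos := Finset.card_pos.2 hfil
          omega
        have hsn : P.s (n + 1) = mixB a b γ (ee γ v (n + 1)) := hs
        have hlt : ee γ v n < ee γ v (n + 1) := ee_lt hv hnm1
        have heγ1 : ee γ v (n + 1) ∈ γ := (ee_invariant hv (n + 1) (by omega)).1
        have hvlt1 : v < ee γ v (n + 1) := lt_of_le_of_lt hgev hlt
        have hnvm : ee γ v (n + 1) ≠ vm := ne_of_gt (lt_of_le_of_lt hvge hvlt1)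
        have hmem := P.mem (n + 1) (by omega) (by omega)
        rw [hsn] at hmem
        rcases LD.outof _ _ heγ1 hnvm hmem with ⟨_, hteq⟩ | ⟨htweq, _⟩
        · exact ⟨by omega, hteq, fun _ => hsn⟩
        · exfalso
          rcases htw with ⟨h0, _⟩ | hsv
          · rw [h0] at htweq; exact nomatch htweq
          · exact absurd (Option.some_injective _ (hsv.symm.trans htweq)) (ne_of_lt hvlt1)
      · exfalso
        rw [upA_eq_image_a hfil] at hs
        have hmem := P.mem (n + 1) (by omega) (by omega)
        rw [hs] at hmem
        have hGScard := LD.outof_imga _ hmem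
        rw [hGt (n + 1) (by omega)] at hGScard
        have hc := P.dim_t (n + 1) (by omega)
        rw [hcard0] at hc
        omega

end Walk


section Main

set_option linter.unusedSectionVars false

variable {V : Type*} {U : Type*} [Fintype V] [LinearOrder V] [LinearOrder U]
variable {a b : V → U} {γ : Finset V} {v : V}

lemma main_abstract {Wf : Set (Finset U × Finset U)}
    (ha : Function.Injective a) (hb : Function.Injective b) (hab : ∀ u v : V, a u ≠ b v)
    (hne : γ.Nonempty) {tw : Option V}
    (LD : LocalData a b Wf γ (γ.min' hne) tw) (hv : v ∈ γ)
    (htw : (tw = none ∧ v = γ.min' hne) ∨ tw = some v)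
    {σ₂ : Finset U} (hσ : σ₂ = γ.image a ∨ σ₂ = γ.image b) :
    ∃! P : ExtTraj Wf, P.t 0 = mixA a b γ v ∧ P.s (P.k + 1) = σ₂ ∧
      (∀ i ≤ P.k, GS a b (P.t i) = γ) ∧
      (∀ i, 1 ≤ i → i ≤ P.k + 1 → GS a b (P.s i) = γ) := by
  set vm := γ.min' hne with hvm
  set m := (γ.filter fun x => v < x).card with hm
  have hvmγ : vm ∈ γ := γ.min'_mem hne
  have hvge : vm ≤ v := γ.min'_le v hv
  have heem : ∀ i ≤ m, ee γ v i ∈ γ := fun i hi => (ee_invariant hv i hi).1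
  rcases hσ with hσa | hσb
  · -- terminal `γ.image a` : the increasing walk of length `m`
    subst hσa
    refine ⟨⟨m, (fun i => if i ≤ m then mixA a b γ (ee γ v i) else ∅),
      (fun i => if 1 ≤ i ∧ i ≤ m then mixB a b γ (ee γ v i)
        else if i = m + 1 then γ.image a else ∅),
      ?_, ?_, ?_, ?_, ?_, ?_, ?_⟩, ⟨?_, ?_, ?_, ?_⟩, ?_⟩
    · -- dim_t
      intro i hi
      show (if i ≤ m then mixA a b γ (ee γ v i) else ∅).card =
        (if 0 ≤ m then mixA a b γ (ee γ v 0) else ∅).card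
      rw [if_pos hi, if_pos (Nat.zero_le m), card_mixA ha hb hab (heem i hi),
        card_mixA ha hb hab (heem 0 (Nat.zero_le m))]
    · -- dim_s
      intro i h1 h2
      show (if 1 ≤ i ∧ i ≤ m then mixB a b γ (ee γ v i)
          else if i = m + 1 then γ.image a else ∅).card + 1 =
        (if 0 ≤ m then mixA a b γ (ee γ v 0) else ∅).card
      rw [if_pos (Nat.zero_le m), card_mixA ha hb hab (heem 0 (Nat.zero_le m))]
      by_cases him : i ≤ m
      · rw [if_pos ⟨h1, him⟩, card_mixB ha hb hab]
      · have hieq : i = m + 1 := by omega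
        rw [if_neg (by omega), if_pos hieq, Finset.card_image_of_injective _ ha]
    · -- mem
      intro i h1 h2
      show (if 1 ≤ i ∧ i ≤ m then mixB a b γ (ee γ v i)
          else if i = m + 1 then γ.image a else ∅,
        if i ≤ m then mixA a b γ (ee γ v i) else ∅) ∈ Wf
      rw [if_pos ⟨h1, h2⟩, if_pos h2]
      have hvlt : v < ee γ v i := (ee_ge hv i h2).2 h1
      refine LD.pairs_std _ (heem i h2) (ne_of_gt (lt_of_le_of_lt hvge hvlt)) ?_
      rcases htw with ⟨h0, _⟩ | hsv
      · rw [h0]; simp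
      · rw [hsv]
        intro hEq
        exact absurd (Option.some_injective _ hEq) (ne_of_lt hvlt)
    · -- sub
      intro i h1 h2
      obtain ⟨j, rfl⟩ : ∃ j, i = j + 1 := ⟨i - 1, by omega⟩
      show (if 1 ≤ j + 1 ∧ j + 1 ≤ m then mixB a b γ (ee γ v (j + 1))
          else if j + 1 = m + 1 then γ.image a else ∅) ⊆
        (if j + 1 - 1 ≤ m then mixA a b γ (ee γ v (j + 1 - 1)) else ∅)
      rw [Nat.add_sub_cancel, if_pos (by omega : j ≤ m)]
      by_cases hjm : j + 1 ≤ m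
      · rw [if_pos ⟨by omega, hjm⟩]
        exact mixB_ee_subset hv (by omega)
      · have hjeq : j + 1 = m + 1 := by omega
        have hjm' : j = m := by omega
        rw [if_neg (by omega), if_pos hjeq, hjm']
        intro y hy
        obtain ⟨z, hz, rfl⟩ := Finset.mem_image.1 hy
        exact (a_mem_mixA ha hab).2 ⟨hz, ee_top hv z hz⟩
    · -- nmem
      intro i h1 h2
      obtain ⟨j, rfl⟩ : ∃ j, i = j + 1 := ⟨i - 1, by omega⟩
      show (if 1 ≤ j + 1 ∧ j + 1 ≤ m then mixB a b γ (ee γ v (j + 1))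
          else if j + 1 = m + 1 then γ.image a else ∅,
        if j + 1 - 1 ≤ m then mixA a b γ (ee γ v (j + 1 - 1)) else ∅) ∉ Wf
      rw [Nat.add_sub_cancel, if_pos (by omega : j ≤ m)]
      by_cases hjm : j + 1 ≤ m
      · rw [if_pos ⟨by omega, hjm⟩]
        intro hmem
        have hvlt : v < ee γ v (j + 1) := (ee_ge hv (j + 1) hjm).2 (by omega)
        rcases LD.outof _ _ (heem (j + 1) hjm) (ne_of_gt (lt_of_le_of_lt hvge hvlt))
            hmem with ⟨_, hteq⟩ | ⟨htweq, _⟩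
        · have := (mixA_inj ha hb hab (heem j (by omega)) (heem (j + 1) hjm) hteq).2
          exact absurd this (ne_of_lt (ee_lt hv (by omega)))
        · rcases htw with ⟨h0, _⟩ | hsv
          · rw [h0] at htweq; exact nomatch htweq
          · exact absurd (Option.some_injective _ (hsv.symm.trans htweq))
              (ne_of_lt hvlt)
      · have hjeq : j + 1 = m + 1 := by omega
        have hjm' : j = m := by omega
        rw [if_neg (by omega), if_pos hjeq, hjm']
        intro hmem
        have hGScard := LD.outof_imga _ hmem
        rw [GS_mixA ha hb hab, card_mixA ha hb hab (heem m le_rfl)] at hGScard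
        omega
    · -- pad_t
      intro i hi
      show (if i ≤ m then mixA a b γ (ee γ v i) else ∅) = ∅
      rw [if_neg (by omega)]
    · -- pad_s
      intro i hi
      show (if 1 ≤ i ∧ i ≤ m then mixB a b γ (ee γ v i)
          else if i = m + 1 then γ.image a else ∅) = ∅
      rcases hi with rfl | hi
      · rw [if_neg (by omega), if_neg (by omega)]
      · rw [if_neg (by omega), if_neg (by omega)]
    · -- t 0 = mixA γ v
      show (if 0 ≤ m then mixA a b γ (ee γ v 0) else ∅) = mixA a b γ v
      rw [if_pos (Nat.zero_le m), ee_zero]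
    · -- s (k+1) = σ₂
      show (if 1 ≤ m + 1 ∧ m + 1 ≤ m then mixB a b γ (ee γ v (m + 1))
          else if m + 1 = m + 1 then γ.image a else ∅) = γ.image a
      rw [if_neg (by omega), if_pos rfl]
    · -- GS of t
      show ∀ i ≤ m, GS a b (if i ≤ m then mixA a b γ (ee γ v i) else ∅) = γ
      intro i hi
      rw [if_pos hi, GS_mixA ha hb hab]
    · -- GS of s
      show ∀ i, 1 ≤ i → i ≤ m + 1 → GS a b (if 1 ≤ i ∧ i ≤ m then mixB a b γ (ee γ v i)
          else if i = m + 1 then γ.image a else ∅) = γ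
      intro i h1 h2
      by_cases him : i ≤ m
      · rw [if_pos ⟨h1, him⟩, GS_mixB ha hb hab]
      · rw [if_neg (by omega), if_pos (by omega), GS_image_a ha hab]
    · -- uniqueness
      rintro P ⟨hP0, hPσ, hPGt, hPGs⟩
      have hcard0 : (P.t 0).card = γ.card + 1 := by
        rw [hP0, card_mixA ha hb hab hv]
      have hleft : 1 ≤ P.k → P.s 1 ≠ mixB a b γ v := by
        intro hk1 heq
        rcases htw with ⟨h0, hveq⟩ | hsv
        · have hmem := P.mem 1 le_rfl hk1
          rw [heq, hveq] at hmem
          have hGScard := LD.outof_min _ hmem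
          rw [hPGt 1 hk1] at hGScard
          have hc := P.dim_t 1 hk1
          rw [hcard0] at hc
          omega
        · obtain ⟨hvγ', hvne, hvmin⟩ := LD.tw_mem v hsv
          have hmem := P.mem 1 le_rfl hk1
          rw [heq] at hmem
          rcases LD.outof _ _ hv hvne hmem with ⟨htwne, _⟩ | ⟨_, hteq⟩
          · exact htwne hsv
          · by_cases hk2 : 1 < P.k
            · exact from_vm_terminal ha hb hab hne LD hsv P hcard0 hPGt hPGs hk2 hteq
            · have hk : P.k = 1 := by omega
              have hterm := facet_step ha hb hab P hcard0 (by omega)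
                (hPGs 2 (by omega) (by omega)) hvmγ hteq
              rw [hk] at hPσ
              rcases hterm with hs2 | hs2
              · rw [hPσ] at hs2
                exact mixB_ne_image_a hb hab hvmγ hs2.symm
              · rw [hPσ] at hs2
                have hfil : (γ.filter fun x => vm < x).Nonempty :=
                  ⟨v, Finset.mem_filter.2 ⟨hv, lt_of_le_of_ne hvge (Ne.symm hvne)⟩⟩
                rw [upA_eq_mixB_nxt hfil] at hs2
                exact mixB_ne_image_a hb hab (nxt_spec hfil).1 hs2.symm
      have INV := forced_walk ha hb hab hne LD hv htw P hP0 hPGt hPGs hleft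
      obtain ⟨hkm, htk, _⟩ := INV P.k le_rfl
      have hterm := facet_step ha hb hab P hcard0 le_rfl
        (hPGs (P.k + 1) (by omega) (by omega)) (heem P.k hkm) htk
      have hkeq : P.k = m := by
        rcases hterm with hs | hs
        · rw [hPσ] at hs
          exact absurd hs.symm (mixB_ne_image_a hb hab (heem P.k hkm))
        · by_cases hfil : (γ.filter fun x => ee γ v P.k < x).Nonempty
          · rw [upA_eq_mixB_nxt hfil, hPσ] at hs
            exact absurd hs.symm (mixB_ne_image_a hb hab (nxt_spec hfil).1)
          · have hcard := (ee_invariant hv P.k hkm).2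
            rw [Finset.not_nonempty_iff_eq_empty] at hfil
            rw [hfil, Finset.card_empty] at hcard
            omega
      apply extTraj_ext
      · exact hkeq
      · funext i
        show P.t i = if i ≤ m then mixA a b γ (ee γ v i) else ∅
        by_cases him : i ≤ m
        · obtain ⟨_, hti, _⟩ := INV i (by omega)
          rw [hti, if_pos him]
        · rw [P.pad_t i (by omega), if_neg him]
      · funext i
        show P.s i = if 1 ≤ i ∧ i ≤ m then mixB a b γ (ee γ v i)
          else if i = m + 1 then γ.image a else ∅
        by_cases hi0 : i = 0
        · subst hi0
          rw [P.pad_s 0 (Or.inl rfl), if_neg (by omega), if_neg (by omega)]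
        · by_cases him : i ≤ m
          · obtain ⟨_, _, hsi⟩ := INV i (by omega)
            rw [hsi (by omega), if_pos ⟨by omega, him⟩]
          · by_cases him1 : i = m + 1
            · subst him1
              rw [if_neg (by omega), if_pos rfl, ← hkeq]
              exact hPσ
            · rw [P.pad_s i (Or.inr (by omega)), if_neg (by omega), if_neg him1]
  · -- terminal `γ.image b`
    subst hσb
    rcases htw with ⟨h0, hveq⟩ | hsv
    · -- v = vm : trivial walk of length 0
      refine ⟨⟨0, (fun i => if i = 0 then mixA a b γ v else ∅),
        (fun i => if i = 1 then γ.image b else ∅),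
        ?_, ?_, ?_, ?_, ?_, ?_, ?_⟩, ⟨?_, ?_, ?_, ?_⟩, ?_⟩
      · intro i hi
        have : i = 0 := by omega
        subst this
        rfl
      · intro i h1 h2
        have : i = 1 := by omega
        subst this
        show (if (1 : ℕ) = 1 then γ.image b else ∅).card + 1 =
          (if (0 : ℕ) = 0 then mixA a b γ v else ∅).card
        rw [if_pos rfl, if_pos rfl, Finset.card_image_of_injective _ hb,
          card_mixA ha hb hab hv]
      · intro i h1 h2
        omega
      · intro i h1 h2
        have : i = 1 := by omega
        subst this
        show (if (1 : ℕ) = 1 then γ.image b else ∅) ⊆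
          (if (1 - 1 : ℕ) = 0 then mixA a b γ v else ∅)
        rw [if_pos rfl, if_pos rfl]
        intro y hy
        obtain ⟨z, hz, rfl⟩ := Finset.mem_image.1 hy
        exact (b_mem_mixA hb hab).2 ⟨hz, hveq ▸ γ.min'_le z hz⟩
      · intro i h1 h2
        have : i = 1 := by omega
        subst this
        show (if (1 : ℕ) = 1 then γ.image b else ∅,
          if (1 - 1 : ℕ) = 0 then mixA a b γ v else ∅) ∉ Wf
        rw [if_pos rfl, if_pos rfl]
        intro hmem
        rw [image_b_eq_mixB hne, ← hvm] at hmem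
        have hGScard := LD.outof_min _ hmem
        rw [GS_mixA ha hb hab, card_mixA ha hb hab hv] at hGScard
        omega
      · intro i hi
        show (if i = 0 then mixA a b γ v else ∅) = ∅
        rw [if_neg (by omega)]
      · intro i hi
        show (if i = 1 then γ.image b else ∅) = ∅
        rcases hi with rfl | hi
        · rw [if_neg (by omega)]
        · rw [if_neg (by omega)]
      · show (if (0 : ℕ) = 0 then mixA a b γ v else ∅) = mixA a b γ v
        rw [if_pos rfl]
      · show (if (0 + 1 : ℕ) = 1 then γ.image b else ∅) = γ.image b
        rw [if_pos rfl]
      · show ∀ i ≤ 0, GS a b (if i = 0 then mixA a b γ v else ∅) = γ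
        intro i hi
        have : i = 0 := by omega
        subst this
        rw [if_pos rfl, GS_mixA ha hb hab]
      · show ∀ i, 1 ≤ i → i ≤ 0 + 1 →
          GS a b (if i = 1 then γ.image b else ∅) = γ
        intro i h1 h2
        have : i = 1 := by omega
        subst this
        rw [if_pos rfl, GS_image_b hb hab]
      · rintro P ⟨hP0, hPσ, hPGt, hPGs⟩
        have hcard0 : (P.t 0).card = γ.card + 1 := by
          rw [hP0, card_mixA ha hb hab hv]
        have hleft : 1 ≤ P.k → P.s 1 ≠ mixB a b γ v := by
          intro hk1 heq
          have hmem := P.mem 1 le_rfl hk1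
          rw [heq, hveq] at hmem
          have hGScard := LD.outof_min _ hmem
          rw [hPGt 1 hk1] at hGScard
          have hc := P.dim_t 1 hk1
          rw [hcard0] at hc
          omega
        have INV := forced_walk ha hb hab hne LD hv
          (Or.inl ⟨h0, hveq⟩) P hP0 hPGt hPGs hleft
        obtain ⟨hkm, htk, _⟩ := INV P.k le_rfl
        have hterm := facet_step ha hb hab P hcard0 le_rfl
          (hPGs (P.k + 1) (by omega) (by omega)) (heem P.k hkm) htk
        have hk0 : P.k = 0 := by
          rcases hterm with hs | hs
          · rw [hPσ, image_b_eq_mixB hne, ← hvm] at hs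
            have hEq := (mixB_inj ha hb hab hvmγ (heem P.k hkm) hs).2
            by_contra hk1
            have hvlt : v < ee γ v P.k := (ee_ge hv P.k hkm).2 (by omega)
            have : vm < ee γ v P.k := lt_of_le_of_lt hvge hvlt
            exact absurd hEq (ne_of_lt this)
          · rw [hPσ] at hs
            exact absurd (hs ▸ a_mem_upA ha hab (heem P.k hkm))
              (a_mem_image_b hab)
        apply extTraj_ext
        · exact hk0
        · funext i
          show P.t i = if i = 0 then mixA a b γ v else ∅
          by_cases hi0 : i = 0
          · subst hi0
            rw [hP0, if_pos rfl]
          · rw [P.pad_t i (by omega), if_neg hi0]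
        · funext i
          show P.s i = if i = 1 then γ.image b else ∅
          by_cases hi1 : i = 1
          · subst hi1
            rw [if_pos rfl, ← hPσ, hk0]
          · by_cases hi0 : i = 0
            · subst hi0
              rw [P.pad_s 0 (Or.inl rfl), if_neg (by omega)]
            · rw [P.pad_s i (Or.inr (by omega)), if_neg hi1]
    · -- tw = some v : twisted walk of length 1
      obtain ⟨hvγ', hvne, hvmin⟩ := LD.tw_mem v hsv
      have hvlt : vm < v := lt_of_le_of_ne hvge (Ne.symm hvne)
      refine ⟨⟨1, (fun i => if i = 0 then mixA a b γ v
          else if i = 1 then mixA a b γ vm else ∅),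
        (fun i => if i = 1 then mixB a b γ v else if i = 2 then γ.image b else ∅),
        ?_, ?_, ?_, ?_, ?_, ?_, ?_⟩, ⟨?_, ?_, ?_, ?_⟩, ?_⟩
      · intro i hi
        have : i = 0 ∨ i = 1 := by omega
        rcases this with rfl | rfl
        · rfl
        · show (if (1 : ℕ) = 0 then mixA a b γ v
              else if (1 : ℕ) = 1 then mixA a b γ vm else ∅).card =
            (if (0 : ℕ) = 0 then mixA a b γ v
              else if (0 : ℕ) = 1 then mixA a b γ vm else ∅).card
          rw [if_neg one_ne_zero, if_pos rfl, if_pos rfl,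
            card_mixA ha hb hab hvmγ, card_mixA ha hb hab hv]
      · intro i h1 h2
        have : i = 1 ∨ i = 2 := by omega
        show (if i = 1 then mixB a b γ v else if i = 2 then γ.image b else ∅).card + 1 =
          (if (0 : ℕ) = 0 then mixA a b γ v
            else if (0 : ℕ) = 1 then mixA a b γ vm else ∅).card
        rw [if_pos rfl, card_mixA ha hb hab hv]
        rcases this with rfl | rfl
        · rw [if_pos rfl, card_mixB ha hb hab]
        · rw [if_neg (by omega), if_pos rfl, Finset.card_image_of_injective _ hb]
      · intro i h1 h2
        have : i = 1 := by omega
        subst this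
        show (if (1 : ℕ) = 1 then mixB a b γ v else if (1 : ℕ) = 2 then γ.image b else ∅,
          if (1 : ℕ) = 0 then mixA a b γ v
            else if (1 : ℕ) = 1 then mixA a b γ vm else ∅) ∈ Wf
        rw [if_pos rfl, if_neg one_ne_zero, if_pos rfl]
        exact LD.pairs_tw v hsv
      · intro i h1 h2
        have : i = 1 ∨ i = 2 := by omega
        rcases this with rfl | rfl
        · show (if (1 : ℕ) = 1 then mixB a b γ v else if (1 : ℕ) = 2 then γ.image b else ∅) ⊆
            (if (1 - 1 : ℕ) = 0 then mixA a b γ v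
              else if (1 - 1 : ℕ) = 1 then mixA a b γ vm else ∅)
          rw [if_pos rfl, if_pos rfl]
          exact mixB_subset_mixA
        · show (if (2 : ℕ) = 1 then mixB a b γ v else if (2 : ℕ) = 2 then γ.image b else ∅) ⊆
            (if (2 - 1 : ℕ) = 0 then mixA a b γ v
              else if (2 - 1 : ℕ) = 1 then mixA a b γ vm else ∅)
          rw [if_neg (by omega), if_pos rfl, if_neg (by omega), if_pos rfl]
          intro y hy
          obtain ⟨z, hz, rfl⟩ := Finset.mem_image.1 hy
          exact (b_mem_mixA hb hab).2 ⟨hz, γ.min'_le z hz⟩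
      · intro i h1 h2
        have : i = 1 ∨ i = 2 := by omega
        rcases this with rfl | rfl
        · show (if (1 : ℕ) = 1 then mixB a b γ v else if (1 : ℕ) = 2 then γ.image b else ∅,
            if (1 - 1 : ℕ) = 0 then mixA a b γ v
              else if (1 - 1 : ℕ) = 1 then mixA a b γ vm else ∅) ∉ Wf
          rw [if_pos rfl, if_pos rfl]
          intro hmem
          rcases LD.outof _ _ hv hvne hmem with ⟨htwne, _⟩ | ⟨_, hteq⟩
          · exact htwne hsv
          · exact hvne (mixA_inj ha hb hab hv hvmγ hteq).2
        · show (if (2 : ℕ) = 1 then mixB a b γ v else if (2 : ℕ) = 2 then γ.image b else ∅,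
            if (2 - 1 : ℕ) = 0 then mixA a b γ v
              else if (2 - 1 : ℕ) = 1 then mixA a b γ vm else ∅) ∉ Wf
          rw [if_neg (by omega), if_pos rfl, if_neg (by omega), if_pos rfl]
          intro hmem
          rw [image_b_eq_mixB hne, ← hvm] at hmem
          have hGScard := LD.outof_min _ hmem
          rw [GS_mixA ha hb hab, card_mixA ha hb hab hvmγ] at hGScard
          omega
      · intro i hi
        show (if i = 0 then mixA a b γ v else if i = 1 then mixA a b γ vm else ∅) = ∅
        rw [if_neg (by omega), if_neg (by omega)]
      · intro i hi
        show (if i = 1 then mixB a b γ v else if i = 2 then γ.image b else ∅) = ∅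
        rcases hi with rfl | hi
        · rw [if_neg (by omega), if_neg (by omega)]
        · rw [if_neg (by omega), if_neg (by omega)]
      · show (if (0 : ℕ) = 0 then mixA a b γ v
          else if (0 : ℕ) = 1 then mixA a b γ vm else ∅) = mixA a b γ v
        rw [if_pos rfl]
      · show (if (1 + 1 : ℕ) = 1 then mixB a b γ v
          else if (1 + 1 : ℕ) = 2 then γ.image b else ∅) = γ.image b
        rw [if_neg (by omega), if_pos rfl]
      · show ∀ i ≤ 1, GS a b (if i = 0 then mixA a b γ v
            else if i = 1 then mixA a b γ vm else ∅) = γ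
        intro i hi
        have : i = 0 ∨ i = 1 := by omega
        rcases this with rfl | rfl
        · rw [if_pos rfl, GS_mixA ha hb hab]
        · rw [if_neg one_ne_zero, if_pos rfl, GS_mixA ha hb hab]
      · show ∀ i, 1 ≤ i → i ≤ 1 + 1 → GS a b (if i = 1 then mixB a b γ v
            else if i = 2 then γ.image b else ∅) = γ
        intro i h1 h2
        have : i = 1 ∨ i = 2 := by omega
        rcases this with rfl | rfl
        · rw [if_pos rfl, GS_mixB ha hb hab]
        · rw [if_neg (by omega), if_pos rfl, GS_image_b hb hab]
      · rintro P ⟨hP0, hPσ, hPGt, hPGs⟩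
        have hcard0 : (P.t 0).card = γ.card + 1 := by
          rw [hP0, card_mixA ha hb hab hv]
        have hk1 : 1 ≤ P.k := by
          by_contra hk0'
          have hk : P.k = 0 := by omega
          have hterm := facet_step ha hb hab P hcard0 (by omega)
            (hPGs 1 (by omega) (by omega)) hv hP0
          rw [hk] at hPσ
          rcases hterm with hs | hs
          · rw [hPσ, image_b_eq_mixB hne, ← hvm] at hs
            exact hvne ((mixB_inj ha hb hab hvmγ hv hs).2).symm
          · rw [hPσ] at hs
            exact absurd (hs ▸ a_mem_upA ha hab hv) (a_mem_image_b hab)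
        by_cases hs1 : P.s 1 = mixB a b γ v
        · have hmem := P.mem 1 le_rfl hk1
          rw [hs1] at hmem
          rcases LD.outof _ _ hv hvne hmem with ⟨htwne, _⟩ | ⟨_, ht1⟩
          · exact (htwne hsv).elim
          have hkP : P.k = 1 := by
            by_contra hk2
            exact from_vm_terminal ha hb hab hne LD hsv P hcard0 hPGt hPGs
              (by omega) ht1
          apply extTraj_ext
          · exact hkP
          · funext i
            show P.t i = if i = 0 then mixA a b γ v
              else if i = 1 then mixA a b γ vm else ∅
            by_cases hi0 : i = 0
            · subst hi0
              rw [hP0, if_pos rfl]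
            · by_cases hi1 : i = 1
              · subst hi1
                rw [ht1, if_neg one_ne_zero, if_pos rfl]
              · rw [P.pad_t i (by omega), if_neg hi0, if_neg hi1]
          · funext i
            show P.s i = if i = 1 then mixB a b γ v
              else if i = 2 then γ.image b else ∅
            by_cases hi1 : i = 1
            · subst hi1
              rw [hs1, if_pos rfl]
            · by_cases hi2 : i = 2
              · subst hi2
                rw [if_neg (by omega), if_pos rfl, ← hPσ, hkP]
              · by_cases hi0 : i = 0
                · subst hi0
                  rw [P.pad_s 0 (Or.inl rfl), if_neg (by omega), if_neg (by omega)]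
                · rw [P.pad_s i (Or.inr (by omega)), if_neg hi1, if_neg hi2]
        · -- increasing walk : impossible with terminal `γ.image b`
          exfalso
          have INV := forced_walk ha hb hab hne LD hv (Or.inr hsv) P hP0 hPGt hPGs
            (fun _ => hs1)
          obtain ⟨hkm, htk, _⟩ := INV P.k le_rfl
          have hterm := facet_step ha hb hab P hcard0 le_rfl
            (hPGs (P.k + 1) (by omega) (by omega)) (heem P.k hkm) htk
          rcases hterm with hs | hs
          · rw [hPσ, image_b_eq_mixB hne, ← hvm] at hs
            have hEq := (mixB_inj ha hb hab hvmγ (heem P.k hkm) hs).2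
            have hgev : v ≤ ee γ v P.k := (ee_ge hv P.k hkm).1
            exact absurd hEq (ne_of_lt (lt_of_lt_of_le hvlt hgev))
          · rw [hPσ] at hs
            exact absurd (hs ▸ a_mem_upA ha hab (heem P.k hkm)) (a_mem_image_b hab)

end Main

/-- Let `τ₁` be an interior prism simplex which is `W`-critical or is
paired in `W` with a simplex of different ground simplex, and let
`σ₂ ∈ (A∩B)_Ā ∪ (A∩B)_B̄` with `GS(τ₁) = GS(σ₂)`.  Then there is exactly one
extended `W`-trajectory from `τ₁` to `σ₂` in which every simplex has ground simplex
`GS(τ₁)`. -/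
theorem unique_ground_simplex_preserving_trajectory
    {V : Type*} {U : Type*} [Fintype V] [LinearOrder V] [LinearOrder U]
    (X A B : Set (Finset V)) (a b c : V → U)
    (WA WB WC : Set (Finset U × Finset U))
    (hX : IsComplex X) (hA : IsComplex A) (hB : IsComplex B)
    (hUnion : A ∪ B = X)
    (ha : StrictMono a) (hb : StrictMono b) (hc : StrictMono c)
    (hab : ∀ u v : V, a u ≠ b v) (hac : ∀ u v : V, a u ≠ c v)
    (hbc : ∀ u v : V, b u ≠ c v)
    (hWA : IsGVF (copy a A) WA) (hWB : IsGVF (copy b B) WB)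
    (hWC : IsGVF (copy c (A ∩ B)) WC)
    (τ₁ σ₂ : Finset U)
    (hτ : τ₁ ∈ prismInt a b (A ∩ B)) (hσ : σ₂ ∈ copy a (A ∩ B) ∪ copy b (A ∩ B))
    (hcard : τ₁.card = σ₂.card + 1)
    (H1 : IsCritical (Wfield a b c (A ∩ B) WA WB WC) τ₁ ∨
      ∃ σ₁, (σ₁, τ₁) ∈ Wfield a b c (A ∩ B) WA WB WC ∧ GS a b σ₁ ≠ GS a b τ₁)
    (hGS : GS a b τ₁ = GS a b σ₂) :
    ∃! P : ExtTraj (Wfield a b c (A ∩ B) WA WB WC),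
      P.t 0 = τ₁ ∧ P.s (P.k + 1) = σ₂ ∧
        (∀ i ≤ P.k, GS a b (P.t i) = GS a b τ₁) ∧
        ∀ i, 1 ≤ i → i ≤ P.k + 1 → GS a b (P.s i) = GS a b τ₁ := by
  have hai : Function.Injective a := ha.injective
  have hbi : Function.Injective b := hb.injective
  have hci : Function.Injective c := hc.injective
  obtain ⟨hpr, hncopy⟩ := hτ
  simp only [prism, Set.mem_iUnion] at hpr
  obtain ⟨γ, hγC, hτS⟩ := hpr
  have hneγ : γ.Nonempty := (hA.2 γ hγC.1).1
  have hσshape : ∃ δ : Finset V, δ ∈ A ∩ B ∧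
      (σ₂ = δ.image a ∨ σ₂ = δ.image b) ∧ GS a b σ₂ = δ := by
    rcases hσ with ⟨δ, hδ, rfl⟩ | ⟨δ, hδ, rfl⟩
    · exact ⟨δ, hδ, Or.inl rfl, GS_image_a hai hab⟩
    · exact ⟨δ, hδ, Or.inr rfl, GS_image_b hbi hab⟩
  obtain ⟨δ, hδC, hσab, hGSσ⟩ := hσshape
  have hσcard : σ₂.card = δ.card := by
    rcases hσab with rfl | rfl
    · exact Finset.card_image_of_injective _ hai
    · exact Finset.card_image_of_injective _ hbi
  rcases hτS with hAs | hBs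
  · obtain ⟨v, hvγ, hτeq⟩ := hAs
    subst hτeq
    have hGSτ : GS a b (mixA a b γ v) = γ := GS_mixA hai hbi hab
    have hδγ : δ = γ := by rw [← hGSσ, ← hGS, hGSτ]
    rw [hδγ] at hσab
    obtain ⟨tw, LD⟩ := build_LocalData hA hai hbi hci hab hWA.1 hWB.1 hWC.1 hγC hneγ
    have htwv := H1_forces hai hbi hab hneγ LD hvγ H1
    have hmain := main_abstract hai hbi hab hneγ LD hvγ htwv hσab
    simp only [hGSτ]
    exact hmain
  · rcases hBs with ⟨v, hvγ, hτeq⟩ | hτeq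
    · exfalso
      have hGSτ : GS a b τ₁ = γ := by rw [hτeq]; exact GS_mixB hai hbi hab
      have hδγ : δ = γ := by rw [← hGSσ, ← hGS, hGSτ]
      have hτcard : τ₁.card = γ.card := by rw [hτeq]; exact card_mixB hai hbi hab
      rw [hσcard, hδγ] at hcard
      omega
    · exact absurd (Or.inl ⟨γ, hγC, hτeq⟩) hncopy

end DMT
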